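/- arXiv:1403.3442 — 4 statements merged into one kernel-verified Lean document; each statement's English description precedes it below -/
import Mathlib

section
/- Let Ω ⊂ ℝ³ be a bounded open set. There exists a constant C_DSG > 0, depending only on Ω, such that for every continuously differentiable vector field u : ℝ³ → ℝ³ with compact support contained in Ω one has ∫_Ω ‖∇u(x)‖² dx ≤ C_DSG · ∫_Ω ‖dev sym ∇u(x)‖² dx. -/
open MeasureTheory

noncomputable section

/-- Points of ℝ³. -/
abbrev R3 : Type := Fin 3 → ℝ
/-- 3×3 real matrices (as functions). -/
abbrev M3 : Type := Fin 3 → Fin 3 → ℝ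

/-- Frobenius inner product ⟨X,Y⟩ = tr(X Yᵀ) = ∑ᵢⱼ Xᵢⱼ Yᵢⱼ. -/
def finner (X Y : M3) : ℝ := ∑ i, ∑ j, X i j * Y i j

/-- Squared Frobenius norm ‖X‖². -/
def fnormSq (X : M3) : ℝ := finner X X

/-- Matrix trace. -/
def trM (X : M3) : ℝ := ∑ i, X i i

/-- Matrix transpose. -/
def transp (X : M3) : M3 := fun i j => X j i

/-- Symmetric part sym X = (X + Xᵀ)/2. -/
def symMat (X : M3) : M3 := fun i j => (X i j + X j i) / 2

/-- Skew-symmetric part skew X = (X − Xᵀ)/2. -/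
def skeww (X : M3) : M3 := fun i j => (X i j - X j i) / 2

/-- 3×3 identity matrix. -/
def idM : M3 := fun i j => if i = j then 1 else 0

/-- Deviatoric (trace-free) part dev X = X − (tr X / 3)·𝟙. -/
def devv (X : M3) : M3 := fun i j => X i j - (trM X / 3) * idM i j

/-- X is a symmetric matrix. -/
def isSymmM (X : M3) : Prop := ∀ i j, X i j = X j i

/-- Partial derivative ∂ⱼ f (x). -/
def pd (j : Fin 3) (f : R3 → ℝ) (x : R3) : ℝ := fderiv ℝ f x (Pi.single j 1)

/-- curl v = (∂₂v₃ − ∂₃v₂, ∂₃v₁ − ∂₁v₃, ∂₁v₂ − ∂₂v₁) (0-based indices). -/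
def curlV (v : R3 → R3) (x : R3) : R3 :=
  ![pd 1 (fun y => v y 2) x - pd 2 (fun y => v y 1) x,
    pd 2 (fun y => v y 0) x - pd 0 (fun y => v y 2) x,
    pd 0 (fun y => v y 1) x - pd 1 (fun y => v y 0) x]

/-- Row-wise Curl of a matrix field: the i-th row of Curl P is curl of the i-th row of P. -/
def CurlM (P : R3 → M3) (x : R3) : M3 := fun i => curlV (fun y => P y i) x

/-- Jacobian matrix (∇u)ᵢⱼ = ∂ⱼ uᵢ. -/
def jac (u : R3 → R3) (x : R3) : M3 := fun i j => pd j (fun y => u y i) x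

open Filter Topology

namespace S5
def Dq (t : ℝ) (v : R3) (f : R3 → ℝ) (x : R3) : ℝ := (f (x + t • v) - f x) / t

-- continuity / support / integrability basics
lemma cont_pd {f : R3 → ℝ} (hf : ContDiff ℝ 1 f) (j : Fin 3) : Continuous (pd j f) := by
  have h := hf.continuous_fderiv one_ne_zero
  exact ((ContinuousLinearMap.apply ℝ ℝ (Pi.single j (1:ℝ))).continuous).comp h

lemma pd_zero_of_nmem {f : R3 → ℝ} {x : R3} (hx : x ∉ tsupport f) (j : Fin 3) : pd j f x = 0 := by
  have : fderiv ℝ f x = 0 := by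
    by_contra h
    exact hx (support_fderiv_subset ℝ (by simpa [Function.mem_support] using h))
  simp [pd, this]

lemma hcs_pd {f : R3 → ℝ} (hfs : HasCompactSupport f) (j : Fin 3) : HasCompactSupport (pd j f) :=
  HasCompactSupport.intro hfs (fun x hx => pd_zero_of_nmem hx j)

lemma integ_shift_mul {g h : R3 → ℝ} (hg : Continuous g) (hgs : HasCompactSupport g)
    (hh : Continuous h) (a b : R3) :
    Integrable (fun x => g (x + a) * h (x + b)) := by
  have hc : Continuous fun x : R3 => g (x + a) * h (x + b) :=
    (hg.comp (continuous_id.add continuous_const)).mul (hh.comp (continuous_id.add continuous_const))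
  have hs : HasCompactSupport fun x : R3 => g (x + a) :=
    hgs.comp_homeomorph (Homeomorph.addRight a)
  exact hc.integrable_of_hasCompactSupport (hs.mul_right)

-- translation identity
lemma shift_int (f : R3 → ℝ) (a : R3) : ∫ x, f (x + a) = ∫ x, f x :=
  integral_add_right_eq_self f a

end S5

namespace S5
lemma stepB {g h : R3 → ℝ} (hg : Continuous g) (hgs : HasCompactSupport g)
    (hh : Continuous h) (hhs : HasCompactSupport h) (t : ℝ) (v w : R3) :
    ∫ x, Dq t v g x * Dq t w h x = ∫ x, Dq (-t) w g x * Dq (-t) v h x := by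
  have expand : ∀ (s : ℝ) (p q : R3) (x : R3),
      Dq s p g x * Dq s q h x =
        (g (x + s • p) * h (x + s • q) - g (x + s • p) * h x
          - g x * h (x + s • q) + g x * h x) / (s * s) := by
    intro s p q x
    simp only [Dq, div_mul_div_comm]
    ring_nf
  -- four integrable pieces
  have I : ∀ a b : R3, Integrable (fun x => g (x + a) * h (x + b)) :=
    fun a b => integ_shift_mul hg hgs hh a b
  have I0 : ∀ a b : R3, Integrable (fun x => g (x + a) * h (x + b) - g (x + a) * h x
      - g x * h (x + b) + g x * h x) := by
    intro a b
    have h1 := I a b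
    have h2 := I a 0
    have h3 := I 0 b
    have h4 := I 0 0
    simp only [add_zero] at h2 h3 h4
    exact ((h1.sub h2).sub h3).add h4
  have key4 : ∀ s : ℝ,
      (∫ x, (g (x + s • v) * h (x + s • w) - g (x + s • v) * h x
          - g x * h (x + s • w) + g x * h x)) =
      ∫ x, (g (x + (-s) • w) * h (x + (-s) • v) - g (x + (-s) • w) * h x
          - g x * h (x + (-s) • v) + g x * h x) := by
    intro s
    have h1 := I (s • v) (s • w); have h2 := I (s • v) 0; have h3 := I (0:R3) (s • w)
    have h4 := I (0:R3) 0
    have h1' := I ((-s) • w) ((-s) • v); have h2' := I ((-s) • w) 0; have h3' := I (0:R3) ((-s) • v)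
    simp only [add_zero] at h2 h3 h4 h2' h3'
    have hA : Integrable (fun x => g (x + s • v) * h (x + s • w) - g (x + s • v) * h x
        - g x * h (x + s • w)) := (h1.sub h2).sub h3
    have hB : Integrable (fun x => g (x + s • v) * h (x + s • w) - g (x + s • v) * h x) :=
      h1.sub h2
    have hA' : Integrable (fun x => g (x + (-s) • w) * h (x + (-s) • v) - g (x + (-s) • w) * h x
        - g x * h (x + (-s) • v)) := (h1'.sub h2').sub h3'
    have hB' : Integrable (fun x => g (x + (-s) • w) * h (x + (-s) • v) - g (x + (-s) • w) * h x) :=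
      h1'.sub h2'
    rw [integral_add hA h4, integral_sub hB h3, integral_sub h1 h2,
        integral_add hA' h4, integral_sub hB' h3', integral_sub h1' h2']
    -- term 1: shift by  -(s•v) then ... use shift lemmas
    have e1 : (∫ x, g (x + s • v) * h (x + s • w)) = ∫ x, g (x + (-s) • w) * h (x + (-s) • v) := by
      have A : (∫ x, g (x + s • v) * h (x + s • w))
          = ∫ x, g x * h (x + s • w - s • v) := by
        rw [← shift_int (fun x => g x * h (x + s • w - s • v)) (s • v)]
        congr 1; funext x; congr 2; abel
      have B : (∫ x, g (x + (-s) • w) * h (x + (-s) • v))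
          = ∫ x, g x * h (x + s • w - s • v) := by
        rw [← shift_int (fun x => g x * h (x + s • w - s • v)) ((-s) • w)]
        congr 1; funext x; congr 2
        simp only [neg_smul]; abel
      rw [A, B]
    have e2 : (∫ x, g (x + s • v) * h x) = ∫ x, g x * h (x + (-s) • v) := by
      rw [← shift_int (fun x => g x * h (x + (-s) • v)) (s • v)]
      congr 1; funext x; congr 2
      simp only [neg_smul]; abel
    have e3 : (∫ x, g x * h (x + s • w)) = ∫ x, g (x + (-s) • w) * h x := by
      rw [← shift_int (fun x => g (x + (-s) • w) * h x) (s • w)]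
      congr 1; funext x; congr 2
      · simp only [neg_smul]; abel
    rw [e1, e2, e3]; ring
  calc ∫ x, Dq t v g x * Dq t w h x
      = ∫ x, (g (x + t • v) * h (x + t • w) - g (x + t • v) * h x
          - g x * h (x + t • w) + g x * h x) / (t * t) := by
        congr 1; funext x; exact expand t v w x
    _ = (∫ x, (g (x + t • v) * h (x + t • w) - g (x + t • v) * h x
          - g x * h (x + t • w) + g x * h x)) / (t * t) := by
        rw [integral_div]
    _ = (∫ x, (g (x + (-t) • w) * h (x + (-t) • v) - g (x + (-t) • w) * h x
          - g x * h (x + (-t) • v) + g x * h x)) / (t * t) := by rw [key4 t]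
    _ = (∫ x, (g (x + (-t) • w) * h (x + (-t) • v) - g (x + (-t) • w) * h x
          - g x * h (x + (-t) • v) + g x * h x)) / ((-t) * (-t)) := by rw [neg_mul_neg]
    _ = ∫ x, (g (x + (-t) • w) * h (x + (-t) • v) - g (x + (-t) • w) * h x
          - g x * h (x + (-t) • v) + g x * h x) / ((-t) * (-t)) := by rw [integral_div]
    _ = ∫ x, Dq (-t) w g x * Dq (-t) v h x := by
        congr 1; funext x; exact (expand (-t) w v x).symm
end S5

namespace S5

-- pointwise convergence of difference quotients
lemma Dq_tendsto {g : R3 → ℝ} (hg : ContDiff ℝ 1 g) (v : R3) (x : R3)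
    {t : ℕ → ℝ} (ht0 : Tendsto t atTop (𝓝 0)) (htne : ∀ n, t n ≠ 0) :
    Tendsto (fun n => Dq (t n) v g x) atTop (𝓝 (fderiv ℝ g x v)) := by
  have h1 : HasDerivAt (fun s : ℝ => x + s • v) v 0 := by
    simpa using ((hasDerivAt_id (0:ℝ)).smul_const v).const_add x
  have h2 : HasFDerivAt g (fderiv ℝ g (x + (0:ℝ) • v)) (x + (0:ℝ) • v) :=
    (hg.differentiable one_ne_zero (x + (0:ℝ) • v)).hasFDerivAt
  have hφ : HasDerivAt (fun s : ℝ => g (x + s • v)) (fderiv ℝ g x v) 0 := by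
    have := h2.comp_hasDerivAt 0 h1
    simp only [zero_smul, add_zero] at this
    exact this
  have hslope := hasDerivAt_iff_tendsto_slope.mp hφ
  have htt : Tendsto t atTop (𝓝[≠] (0:ℝ)) :=
    tendsto_nhdsWithin_of_tendsto_nhds_of_eventually_within t ht0
      (Eventually.of_forall fun n => by simpa using htne n)
  have := hslope.comp htt
  refine this.congr fun n => ?_
  simp [Function.comp, slope, Dq, vsub_eq_sub, div_eq_inv_mul, mul_comm]

-- uniform bound on difference quotients
lemma Dq_bound {g : R3 → ℝ} (hg : ContDiff ℝ 1 g) {C : ℝ}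
    (hC : ∀ y, ‖fderiv ℝ g y‖ ≤ C) (t : ℝ) (v : R3) (x : R3) :
    |Dq t v g x| ≤ C * ‖v‖ := by
  have hC0 : 0 ≤ C := le_trans (norm_nonneg _) (hC x)
  rcases eq_or_ne t 0 with rfl | ht
  · simp only [Dq, div_zero, abs_zero]
    positivity
  · have hmvt : ‖g (x + t • v) - g x‖ ≤ C * ‖(x + t • v) - x‖ := by
      refine Convex.norm_image_sub_le_of_norm_fderiv_le
        (fun y _ => hg.differentiable one_ne_zero y) (fun y _ => hC y) convex_univ
        (Set.mem_univ x) (Set.mem_univ (x + t • v))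
    have h2 : ‖(x + t • v) - x‖ = |t| * ‖v‖ := by
      simp [norm_smul, Real.norm_eq_abs]
    rw [h2] at hmvt
    have : |Dq t v g x| = ‖g (x + t • v) - g x‖ / |t| := by
      rw [Dq, abs_div]; rfl
    rw [this, div_le_iff₀ (abs_pos.mpr ht)]
    calc ‖g (x + t • v) - g x‖ ≤ C * (|t| * ‖v‖) := hmvt
      _ = C * ‖v‖ * |t| := by ring
end S5

namespace S5

lemma Dq_zero_outside {g : R3 → ℝ} {t : ℝ} {v x : R3} (htb : |t| ≤ 1) (hvb : ‖v‖ ≤ 1)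
    (hx : x ∉ Metric.cthickening 1 (tsupport g)) : Dq t v g x = 0 := by
  have hx1 : g x = 0 := by
    have : x ∉ tsupport g := fun hmem => hx (Metric.self_subset_cthickening _ hmem)
    exact image_eq_zero_of_notMem_tsupport this
  have hx2 : g (x + t • v) = 0 := by
    have : x + t • v ∉ tsupport g := by
      intro hmem
      apply hx
      refine Metric.mem_cthickening_of_dist_le x (x + t • v) 1 _ hmem ?_
      have : dist x (x + t • v) = ‖t • v‖ := by
        rw [dist_eq_norm]; simp [norm_neg]
      rw [this, norm_smul, Real.norm_eq_abs]
      calc |t| * ‖v‖ ≤ 1 * 1 := by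
            exact mul_le_mul htb hvb (norm_nonneg _) zero_le_one
        _ = 1 := by norm_num
    exact image_eq_zero_of_notMem_tsupport this
  simp [Dq, hx1, hx2]

lemma cont_Dq {g : R3 → ℝ} (hg : Continuous g) (t : ℝ) (v : R3) :
    Continuous (Dq t v g) :=
  ((hg.comp (continuous_id.add continuous_const)).sub hg).div_const t

lemma tendsto_int_Dq {g h : R3 → ℝ} (hg : ContDiff ℝ 1 g) (hgs : HasCompactSupport g)
    (hh : ContDiff ℝ 1 h) (hhs : HasCompactSupport h) (v w : R3)
    (hvb : ‖v‖ ≤ 1) (hwb : ‖w‖ ≤ 1)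
    {t : ℕ → ℝ} (ht0 : Tendsto t atTop (𝓝 0)) (htne : ∀ n, t n ≠ 0) (htb : ∀ n, |t n| ≤ 1) :
    Tendsto (fun n => ∫ x, Dq (t n) v g x * Dq (t n) w h x) atTop
      (𝓝 (∫ x, (fderiv ℝ g x v) * (fderiv ℝ h x w))) := by
  obtain ⟨Cg, hCg⟩ := (hgs.fderiv (𝕜 := ℝ)).exists_bound_of_continuous
    (hg.continuous_fderiv one_ne_zero)
  obtain ⟨Ch, hCh⟩ := (hhs.fderiv (𝕜 := ℝ)).exists_bound_of_continuous
    (hh.continuous_fderiv one_ne_zero)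
  have hCg0 : 0 ≤ Cg := le_trans (norm_nonneg _) (hCg 0)
  have hCh0 : 0 ≤ Ch := le_trans (norm_nonneg _) (hCh 0)
  set K : Set R3 := Metric.cthickening 1 (tsupport g) with hK
  have hKc : IsCompact K := hgs.cthickening
  have hKm : MeasurableSet K := Metric.isClosed_cthickening.measurableSet
  set bound : R3 → ℝ := K.indicator (fun _ => (Cg * ‖v‖) * (Ch * ‖w‖)) with hbd
  refine tendsto_integral_of_dominated_convergence bound ?_ ?_ ?_ ?_
  · intro n
    exact ((cont_Dq hg.continuous (t n) v).mul (cont_Dq hh.continuous (t n) w)).aestronglyMeasurable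
  · rw [hbd, integrable_indicator_iff hKm]
    exact integrableOn_const hKc.measure_lt_top.ne
  · intro n
    refine Eventually.of_forall fun x => ?_
    by_cases hx : x ∈ K
    · rw [hbd, Set.indicator_of_mem hx]
      calc ‖Dq (t n) v g x * Dq (t n) w h x‖
          = |Dq (t n) v g x| * |Dq (t n) w h x| := by
            rw [Real.norm_eq_abs, abs_mul]
        _ ≤ (Cg * ‖v‖) * (Ch * ‖w‖) := by
            exact mul_le_mul (Dq_bound hg hCg _ v x) (Dq_bound hh hCh _ w x)
              (abs_nonneg _) (by positivity)
    · rw [hbd, Set.indicator_of_notMem hx]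
      rw [Dq_zero_outside (htb n) hvb hx]
      simp
  · refine Eventually.of_forall fun x => ?_
    exact (Dq_tendsto hg v x ht0 htne).mul (Dq_tendsto hh w x ht0 htne)

end S5

namespace S5

lemma key {g h : R3 → ℝ} (hg : ContDiff ℝ 1 g) (hgs : HasCompactSupport g)
    (hh : ContDiff ℝ 1 h) (hhs : HasCompactSupport h) (i j : Fin 3) :
    ∫ x, pd i g x * pd j h x = ∫ x, pd j g x * pd i h x := by
  set t : ℕ → ℝ := fun n => 1 / ((n : ℝ) + 1) with htdef
  have ht0 : Tendsto t atTop (𝓝 0) := tendsto_one_div_add_atTop_nhds_zero_nat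
  have htpos : ∀ n, 0 < t n := fun n => by positivity
  have htne : ∀ n, t n ≠ 0 := fun n => (htpos n).ne'
  have htb : ∀ n, |t n| ≤ 1 := by
    intro n
    rw [abs_of_pos (htpos n)]
    rw [htdef]
    rw [div_le_one (by positivity)]
    simp
  have ht0' : Tendsto (fun n => -(t n)) atTop (𝓝 0) := by simpa using ht0.neg
  have htne' : ∀ n, -(t n) ≠ 0 := fun n => neg_ne_zero.mpr (htne n)
  have htb' : ∀ n, |(-(t n))| ≤ 1 := fun n => by rw [abs_neg]; exact htb n
  have hnv : ∀ k : Fin 3, ‖(Pi.single k (1:ℝ) : R3)‖ ≤ 1 := by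
    intro k; rw [Pi.norm_single]; simp
  have L1 := tendsto_int_Dq hg hgs hh hhs (Pi.single i 1) (Pi.single j 1)
    (hnv i) (hnv j) ht0 htne htb
  have L2 := tendsto_int_Dq hg hgs hh hhs (Pi.single j 1) (Pi.single i 1)
    (hnv j) (hnv i) ht0' htne' htb'
  have hEq : ∀ n, (∫ x, Dq (t n) (Pi.single i 1) g x * Dq (t n) (Pi.single j 1) h x)
      = ∫ x, Dq (-(t n)) (Pi.single j 1) g x * Dq (-(t n)) (Pi.single i 1) h x :=
    fun n => stepB hg.continuous hgs hh.continuous hhs (t n) _ _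
  have L1' : Tendsto (fun n => ∫ x, Dq (-(t n)) (Pi.single j 1) g x
      * Dq (-(t n)) (Pi.single i 1) h x) atTop
      (𝓝 (∫ x, fderiv ℝ g x (Pi.single i 1) * fderiv ℝ h x (Pi.single j 1))) := by
    refine L1.congr fun n => hEq n
  exact tendsto_nhds_unique L1' L2

end S5

namespace S5

lemma alg_id (X : M3) : fnormSq X = 2 * fnormSq (devv (symMat X)) + (2/3) * (trM X)^2 - finner X (transp X) := by
  simp [fnormSq, finner, devv, symMat, trM, idM, transp, Fin.sum_univ_three]
  ring


variable {u : R3 → R3} (hu : ContDiff ℝ 1 u) (hus : HasCompactSupport u)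

section
include hu hus

lemma hgi (i : Fin 3) : ContDiff ℝ 1 (fun y => u y i) := (contDiff_pi.mp hu) i

lemma hgis (i : Fin 3) : HasCompactSupport (fun y => u y i) :=
  hus.comp_left (g := fun v : R3 => v i) rfl

lemma tsupp_gi (i : Fin 3) : tsupport (fun y => u y i) ⊆ tsupport u := by
  apply closure_mono
  intro x hx
  simp only [Function.mem_support] at hx ⊢
  intro hux; exact hx (by rw [hux]; rfl)

lemma Ipd (i j k l : Fin 3) :
    Integrable (fun x => pd j (fun y => u y i) x * pd l (fun y => u y k) x) := by
  exact ((cont_pd (hgi hu hus i) j).mul (cont_pd (hgi hu hus k) l)).integrable_of_hasCompactSupport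
    ((hcs_pd (hgis hu hus i) j).mul_right)

lemma key_tr :
    ∫ x, (trM (jac u x))^2 = ∫ x, finner (jac u x) (transp (jac u x)) := by
  have e1 : ∀ x : R3, (trM (jac u x))^2
      = ∑ i, ∑ j, pd i (fun y => u y i) x * pd j (fun y => u y j) x := by
    intro x
    rw [sq]
    exact Finset.sum_mul_sum _ _ _ _
  have e2 : ∀ x : R3, finner (jac u x) (transp (jac u x))
      = ∑ i, ∑ j, pd j (fun y => u y i) x * pd i (fun y => u y j) x := fun x => rfl
  calc ∫ x, (trM (jac u x))^2
      = ∫ x, ∑ i, ∑ j, pd i (fun y => u y i) x * pd j (fun y => u y j) x := by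
        congr 1; funext x; exact e1 x
    _ = ∑ i, ∑ j, ∫ x, pd i (fun y => u y i) x * pd j (fun y => u y j) x := by
        rw [integral_finset_sum _ (fun i _ => integrable_finset_sum _
          (fun j _ => Ipd hu hus i i j j))]
        exact Finset.sum_congr rfl fun i _ =>
          integral_finset_sum _ (fun j _ => Ipd hu hus i i j j)
    _ = ∑ i, ∑ j, ∫ x, pd j (fun y => u y i) x * pd i (fun y => u y j) x := by
        exact Finset.sum_congr rfl fun i _ => Finset.sum_congr rfl fun j _ =>
          key (hgi hu hus i) (hgis hu hus i) (hgi hu hus j) (hgis hu hus j) i j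
    _ = ∫ x, ∑ i, ∑ j, pd j (fun y => u y i) x * pd i (fun y => u y j) x := by
        rw [integral_finset_sum _ (fun i _ => integrable_finset_sum _
          (fun j _ => Ipd hu hus i j j i))]
        exact (Finset.sum_congr rfl fun i _ =>
          (integral_finset_sum _ (fun j _ => Ipd hu hus i j j i)).symm)
    _ = ∫ x, finner (jac u x) (transp (jac u x)) := by
        congr 1

end
end S5

namespace S5
section
variable {u : R3 → R3} (hu : ContDiff ℝ 1 u) (hus : HasCompactSupport u)
include hu hus

lemma hCJ (i j : Fin 3) : Continuous fun x => jac u x i j := cont_pd (hgi hu hus i) j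

lemma hCtrS : Continuous fun x => trM (jac u x) := by
  show Continuous fun x => ∑ i, jac u x i i
  exact continuous_finset_sum _ fun i _ => hCJ hu hus i i

lemma hCD (i j : Fin 3) : Continuous fun x => devv (symMat (jac u x)) i j := by
  show Continuous fun x =>
    (jac u x i j + jac u x j i) / 2 - (trM (symMat (jac u x)) / 3) * idM i j
  have htr : Continuous fun x => trM (symMat (jac u x)) := by
    show Continuous fun x => ∑ i, (jac u x i i + jac u x i i) / 2
    exact continuous_finset_sum _ fun i _ => ((hCJ hu hus i i).add (hCJ hu hus i i)).div_const 2
  exact (((hCJ hu hus i j).add (hCJ hu hus j i)).div_const 2).sub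
    ((htr.div_const 3).mul continuous_const)

lemma hCA : Continuous fun x => fnormSq (jac u x) := by
  show Continuous fun x => ∑ i, ∑ j, jac u x i j * jac u x i j
  exact continuous_finset_sum _ fun i _ => continuous_finset_sum _ fun j _ =>
    (hCJ hu hus i j).mul (hCJ hu hus i j)

lemma hCE : Continuous fun x => fnormSq (devv (symMat (jac u x))) := by
  show Continuous fun x => ∑ i, ∑ j,
    devv (symMat (jac u x)) i j * devv (symMat (jac u x)) i j
  exact continuous_finset_sum _ fun i _ => continuous_finset_sum _ fun j _ =>
    (hCD hu hus i j).mul (hCD hu hus i j)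

lemma hCT : Continuous fun x => (trM (jac u x))^2 := (hCtrS hu hus).pow 2

lemma hCP : Continuous fun x => finner (jac u x) (transp (jac u x)) := by
  show Continuous fun x => ∑ i, ∑ j, jac u x i j * jac u x j i
  exact continuous_finset_sum _ fun i _ => continuous_finset_sum _ fun j _ =>
    (hCJ hu hus i j).mul (hCJ hu hus j i)

lemma jac_zero {x : R3} (hx : x ∉ tsupport u) (i j : Fin 3) : jac u x i j = 0 :=
  pd_zero_of_nmem (fun hm => hx (tsupp_gi hu hus i hm)) j

lemma hA0 {x : R3} (hx : x ∉ tsupport u) : fnormSq (jac u x) = 0 := by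
  show (∑ i, ∑ j, jac u x i j * jac u x i j) = 0
  simp [jac_zero hu hus hx]

lemma hE0 {x : R3} (hx : x ∉ tsupport u) : fnormSq (devv (symMat (jac u x))) = 0 := by
  show (∑ i, ∑ j, devv (symMat (jac u x)) i j * devv (symMat (jac u x)) i j) = 0
  have hd : ∀ i j, devv (symMat (jac u x)) i j = 0 := by
    intro i j
    show (jac u x i j + jac u x j i) / 2 - (trM (symMat (jac u x)) / 3) * idM i j = 0
    simp [trM, symMat, idM, jac_zero hu hus hx]
  simp [hd]

lemma hT0 {x : R3} (hx : x ∉ tsupport u) : (trM (jac u x))^2 = 0 := by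
  simp [trM, jac_zero hu hus hx]

lemma hP0 {x : R3} (hx : x ∉ tsupport u) : finner (jac u x) (transp (jac u x)) = 0 := by
  show (∑ i, ∑ j, jac u x i j * jac u x j i) = 0
  simp [jac_zero hu hus hx]

lemma IA : Integrable fun x => fnormSq (jac u x) :=
  (hCA hu hus).integrable_of_hasCompactSupport
    (HasCompactSupport.intro hus fun _ hx => hA0 hu hus hx)

lemma IE : Integrable fun x => fnormSq (devv (symMat (jac u x))) :=
  (hCE hu hus).integrable_of_hasCompactSupport
    (HasCompactSupport.intro hus fun _ hx => hE0 hu hus hx)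

lemma IT : Integrable fun x => (trM (jac u x))^2 :=
  (hCT hu hus).integrable_of_hasCompactSupport
    (HasCompactSupport.intro hus fun _ hx => hT0 hu hus hx)

lemma IP : Integrable fun x => finner (jac u x) (transp (jac u x)) :=
  (hCP hu hus).integrable_of_hasCompactSupport
    (HasCompactSupport.intro hus fun _ hx => hP0 hu hus hx)

lemma main_ineq :
    (∫ x, fnormSq (jac u x)) ≤ 2 * ∫ x, fnormSq (devv (symMat (jac u x))) := by
  have h1 : (∫ x, fnormSq (jac u x))
      = ∫ x, (2 * fnormSq (devv (symMat (jac u x))) + (2/3) * (trM (jac u x))^2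
          - finner (jac u x) (transp (jac u x))) := by
    congr 1; funext x; exact alg_id _
  have hI1 : Integrable fun x => 2 * fnormSq (devv (symMat (jac u x))) :=
    (IE hu hus).const_mul 2
  have hI2 : Integrable fun x => (2/3 : ℝ) * (trM (jac u x))^2 :=
    (IT hu hus).const_mul (2/3)
  have hI12 : Integrable fun x => 2 * fnormSq (devv (symMat (jac u x)))
      + (2/3 : ℝ) * (trM (jac u x))^2 := hI1.add hI2
  rw [h1, integral_sub hI12 (IP hu hus), integral_add hI1 hI2,
      integral_const_mul, integral_const_mul, ← key_tr hu hus]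
  have hTnn : 0 ≤ ∫ x, (trM (jac u x))^2 :=
    integral_nonneg fun x => sq_nonneg _
  linarith

end
end S5


/-- L² bound of ∇u by dev sym ∇u for compactly supported C¹ vector fields in Ω. -/
theorem stmt_5 (Ω : Set R3) (hΩo : IsOpen Ω) (hΩb : Bornology.IsBounded Ω) :
    ∃ C_DSG : ℝ, 0 < C_DSG ∧ ∀ u : R3 → R3, ContDiff ℝ 1 u → HasCompactSupport u → tsupport u ⊆ Ω →
      (∫ x in Ω, fnormSq (jac u x)) ≤ C_DSG * ∫ x in Ω, fnormSq (devv (symMat (jac u x))) := by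
  refine ⟨2, by norm_num, fun u hu hus hsub => ?_⟩
  have hA : (∫ x in Ω, fnormSq (jac u x)) = ∫ x, fnormSq (jac u x) :=
    setIntegral_eq_integral_of_forall_compl_eq_zero
      (fun x hx => S5.hA0 hu hus (fun hm => hx (hsub hm)))
  have hE : (∫ x in Ω, fnormSq (devv (symMat (jac u x))))
      = ∫ x, fnormSq (devv (symMat (jac u x))) :=
    setIntegral_eq_integral_of_forall_compl_eq_zero
      (fun x hx => S5.hE0 hu hus (fun hm => hx (hsub hm)))
  rw [hA, hE]
  exact S5.main_ineq hu hus
end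
end

section
/- Let Ω ⊂ ℝ³ be a bounded open set, and let ℂ, ℍ, 𝕃 be linear maps from ℝ^{3×3} to ℝ^{3×3} such that: ℂ and ℍ map symmetric matrices to symmetric matrices, are self-adjoint with respect to the Frobenius inner product, and satisfy c_m‖X‖² ≤ ⟨ℂ.X, X⟩ ≤ c_M‖X‖² and h_m‖X‖² ≤ ⟨ℍ.X, X⟩ ≤ h_M‖X‖² for all symmetric X with constants c_m, c_M, h_m, h_M > 0; and 𝕃 is self-adjoint and satisfies L_m‖X‖² ≤ ⟨𝕃.X, X⟩ ≤ L_M‖X‖² for all X ∈ ℝ^{3×3} with constants L_m, L_M > 0. Then there exists a constant C > 0 such that for every continuously differentiable vector field u : ℝ³ → ℝ³ and matrix field P : ℝ³ → ℝ^{3×3}, both with compact support contained in Ω: ∫_Ω ( ⟨ℂ.sym(∇u − P), sym(∇u − P)⟩ + ⟨ℍ.sym P, sym P⟩ + ⟨𝕃.Curl P, Curl P⟩ ) dx ≥ C · ( ∫_Ω ‖∇u‖² dx + ∫_Ω ‖P‖² dx + ∫_Ω ‖Curl P‖² dx ). -/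
open MeasureTheory

noncomputable section

namespace aux

lemma pd_continuous {f : R3 → ℝ} (hf : ContDiff ℝ 1 f) (j : Fin 3) :
    Continuous (pd j f) :=
  (hf.continuous_fderiv one_ne_zero).clm_apply continuous_const

lemma pd_hcs {f : R3 → ℝ} (hf : HasCompactSupport f) (j : Fin 3) :
    HasCompactSupport (pd j f) := by
  have h := (hf.fderiv (𝕜 := ℝ)).comp_left (g := fun L : R3 →L[ℝ] ℝ => L (Pi.single j 1)) rfl
  exact h

lemma pd_eq_zero_of_notMem {f : R3 → ℝ} {x : R3} (hx : x ∉ tsupport f) (j : Fin 3) :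
    pd j f x = 0 := by
  have h : f =ᶠ[nhds x] 0 := notMem_tsupport_iff_eventuallyEq.1 hx
  unfold pd
  rw [h.fderiv_eq]
  have h0 : fderiv ℝ (0 : R3 → ℝ) x = 0 := fderiv_const_apply 0
  rw [h0]; rfl

lemma pd_mul {f g : R3 → ℝ} {x : R3} (hf : DifferentiableAt ℝ f x)
    (hg : DifferentiableAt ℝ g x) (j : Fin 3) :
    pd j (fun y => f y * g y) x = pd j f x * g x + f x * pd j g x := by
  unfold pd
  rw [fderiv_fun_mul hf hg]
  simp only [ContinuousLinearMap.add_apply, ContinuousLinearMap.smul_apply, smul_eq_mul]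
  ring

lemma pd_coord (a j : Fin 3) (x : R3) :
    pd j (fun y : R3 => y a) x = (Pi.single j 1 : R3) a := by
  unfold pd
  have : (fun y : R3 => y a) = (ContinuousLinearMap.proj a : R3 →L[ℝ] ℝ) := rfl
  rw [this, ContinuousLinearMap.fderiv]
  rfl

/-- Key: integral of a partial derivative of a C¹ compactly supported function is zero. -/
lemma integral_pd_eq_zero {g : R3 → ℝ} (hg : ContDiff ℝ 1 g) (hcs : HasCompactSupport g)
    (j : Fin 3) : ∫ x : R3, pd j g x = 0 := by
  obtain ⟨r, hr⟩ := hcs.isBounded.subset_closedBall 0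
  set b : ℝ := |r| + 1 with hb
  have hrb : r < b := by
    have := le_abs_self r; simp only [hb]; linarith
  have hb0 : 0 < b := by positivity
  -- the box
  set av : R3 := fun _ => -b with hav
  set bv : R3 := fun _ => b with hbv
  have hab : av ≤ bv := by intro i; simp [hav, hbv]; linarith
  have hsub : tsupport g ⊆ Set.Icc av bv := by
    intro x hx
    have hx' := hr hx
    simp only [Metric.mem_closedBall, dist_zero_right] at hx'
    constructor <;> intro i <;>
      [skip; skip] <;>
      have hxi : |x i| ≤ r := le_trans (norm_le_pi_norm x i) hx'
    · simp only [hav]; have := abs_le.1 hxi; linarith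
    · simp only [hbv]; have := abs_le.1 hxi; linarith
  have hvanish : ∀ x : R3, x ∉ Set.Icc av bv → pd j g x = 0 := by
    intro x hx
    exact pd_eq_zero_of_notMem (fun hmem => hx (hsub hmem)) j
  -- divergence theorem
  have key := MeasureTheory.integral_divergence_of_hasFDerivAt_off_countable'
    (E := ℝ) (n := 2) av bv hab
    (fun i x => if i = j then g x else 0)
    (fun i x => if i = j then fderiv ℝ g x else 0) ∅ Set.countable_empty
    (fun i => by
      by_cases h : i = j <;> simp [h]
      · exact (hg.continuous).continuousOn
      · exact continuousOn_const)
    (fun x _ i => by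
      by_cases h : i = j <;> simp [h]
      · exact (hg.differentiable one_ne_zero x).hasFDerivAt
      · exact hasFDerivAt_const 0 x)
    (by
      have : (fun x : R3 => ∑ i : Fin 3, (if i = j then fderiv ℝ g x else 0) (Pi.single i 1))
          = pd j g := by
        funext x
        rw [Finset.sum_eq_single j]
        · simp [pd]
        · intro i _ hij; simp [hij]
        · intro h; exact absurd (Finset.mem_univ j) h
      rw [this]
      exact ((pd_continuous hg j).integrable_of_hasCompactSupport (pd_hcs hcs j)).integrableOn)
  have hface : ∀ (i : Fin 3) (c : ℝ), |c| = b →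
      ∀ y : Fin 2 → ℝ, (if i = j then g (i.insertNth c y) else 0) = 0 := by
    intro i c hc y
    by_cases h : i = j
    · subst h
      rw [if_pos rfl]
      apply image_eq_zero_of_notMem_tsupport
      intro hmem
      have := hr hmem
      simp only [Metric.mem_closedBall, dist_zero_right] at this
      have h2 : |(i.insertNth c y : R3) i| ≤ r := by
        calc |(i.insertNth c y : R3) i| = ‖(i.insertNth c y : R3) i‖ := (Real.norm_eq_abs _).symm
          _ ≤ ‖(i.insertNth c y : R3)‖ := norm_le_pi_norm _ i
          _ ≤ r := this
      rw [Fin.insertNth_apply_same] at h2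
      rw [hc] at h2; linarith
    · simp [h]
  -- faces vanish
  have hfaces : ∀ i : Fin 3,
      ((∫ x in Set.Icc (av ∘ i.succAbove) (bv ∘ i.succAbove),
        (if i = j then g (i.insertNth (bv i) x) else 0)) -
       ∫ x in Set.Icc (av ∘ i.succAbove) (bv ∘ i.succAbove),
        (if i = j then g (i.insertNth (av i) x) else 0)) = 0 := by
    intro i
    have h1 : ∀ x : Fin 2 → ℝ, (if i = j then g (i.insertNth (bv i) x) else 0) = 0 :=
      hface i (bv i) (by simp only [hbv]; exact abs_of_pos hb0)
    have h2 : ∀ x : Fin 2 → ℝ, (if i = j then g (i.insertNth (av i) x) else 0) = 0 :=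
      hface i (av i) (by simp only [hav]; rw [abs_neg]; exact abs_of_pos hb0)
    simp only [h1, h2, integral_zero, sub_zero]
  rw [Finset.sum_congr rfl (fun i _ => hfaces i), Finset.sum_const_zero] at key
  have hfun : (fun x : R3 => ∑ i : Fin 3, (if i = j then fderiv ℝ g x else 0) (Pi.single i 1))
      = pd j g := by
    funext x
    rw [Finset.sum_eq_single j]
    · simp [pd]
    · intro i _ hij; simp [hij]
    · intro h; exact absurd (Finset.mem_univ j) h
  rw [show (∫ x : R3, pd j g x) = ∫ x in Set.Icc av bv, pd j g x from
    (setIntegral_eq_integral_of_forall_compl_eq_zero (fun x hx => hvanish x hx)).symm]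
  rw [← hfun]
  exact key


lemma contDiff_pd {g : R3 → ℝ} (hg : ContDiff ℝ 2 g) (i : Fin 3) :
    ContDiff ℝ 1 (pd i g) :=
  (hg.fderiv_right (le_refl _)).clm_apply contDiff_const

lemma pd_comm {g : R3 → ℝ} (hg : ContDiff ℝ 2 g) (i j : Fin 3) (x : R3) :
    pd i (pd j g) x = pd j (pd i g) x := by
  have hd : ∀ y, HasFDerivAt g (fderiv ℝ g y) y :=
    fun y => ((hg.differentiable (by norm_num)) y).hasFDerivAt
  have hd1 : ContDiff ℝ 1 (fderiv ℝ g) := hg.fderiv_right (le_refl _)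
  have hd2 : HasFDerivAt (fderiv ℝ g) (fderiv ℝ (fderiv ℝ g) x) x :=
    ((hd1.differentiable one_ne_zero) x).hasFDerivAt
  have hsymm := second_derivative_symmetric hd hd2 (Pi.single i 1) (Pi.single j 1)
  have expand : ∀ k l : Fin 3,
      pd k (pd l g) x = (fderiv ℝ (fderiv ℝ g) x) (Pi.single k 1) (Pi.single l 1) := by
    intro k l
    unfold pd
    rw [fderiv_clm_apply ((hd1.differentiable one_ne_zero) x) (differentiableAt_const _)]
    simp
  rw [expand i j, expand j i, hsymm]

lemma swap_smooth {f g : R3 → ℝ} (hf : ContDiff ℝ 1 f) (hcf : HasCompactSupport f)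
    (hg : ContDiff ℝ 2 g) (hcg : HasCompactSupport g) (i j : Fin 3) :
    ∫ x : R3, pd j f x * pd i g x = ∫ x : R3, pd i f x * pd j g x := by
  set F1 : R3 → ℝ := fun y => f y * pd i g y with hF1
  set F2 : R3 → ℝ := fun y => f y * pd j g y with hF2
  have hF1c : ContDiff ℝ 1 F1 := hf.mul (contDiff_pd hg i)
  have hF2c : ContDiff ℝ 1 F2 := hf.mul (contDiff_pd hg j)
  have hF1cs : HasCompactSupport F1 := hcf.mul_right
  have hF2cs : HasCompactSupport F2 := hcf.mul_right
  have hptwise : ∀ x : R3, pd j f x * pd i g x - pd i f x * pd j g x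
      = pd j F1 x - pd i F2 x := by
    intro x
    have e1 : pd j F1 x = pd j f x * pd i g x + f x * pd j (pd i g) x :=
      pd_mul ((hf.differentiable one_ne_zero) x) (((contDiff_pd hg i).differentiable one_ne_zero) x) j
    have e2 : pd i F2 x = pd i f x * pd j g x + f x * pd i (pd j g) x :=
      pd_mul ((hf.differentiable one_ne_zero) x) (((contDiff_pd hg j).differentiable one_ne_zero) x) i
    rw [e1, e2, pd_comm hg i j x]
    ring
  have hint : ∀ (a b : Fin 3), Integrable (fun x : R3 => pd a f x * pd b g x) := by
    intro a b
    apply Continuous.integrable_of_hasCompactSupport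
    · exact (pd_continuous hf a).mul ((contDiff_pd hg b).continuous)
    · exact (pd_hcs hcf a).mul_right
  have split : (∫ x : R3, pd j f x * pd i g x) - (∫ x : R3, pd i f x * pd j g x)
      = ∫ x : R3, (pd j f x * pd i g x - pd i f x * pd j g x) :=
    (integral_sub (hint j i) (hint i j)).symm
  have zero1 : (∫ x : R3, pd j F1 x) = 0 := integral_pd_eq_zero hF1c hF1cs j
  have zero2 : (∫ x : R3, pd i F2 x) = 0 := integral_pd_eq_zero hF2c hF2cs i
  have intF : ∀ (a : Fin 3) (F : R3 → ℝ), ContDiff ℝ 1 F → HasCompactSupport F →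
      Integrable (fun x : R3 => pd a F x) := fun a F hc hcs =>
    (pd_continuous hc a).integrable_of_hasCompactSupport (pd_hcs hcs a)
  have : (∫ x : R3, (pd j f x * pd i g x - pd i f x * pd j g x))
      = (∫ x : R3, pd j F1 x) - ∫ x : R3, pd i F2 x := by
    rw [← integral_sub (intF j F1 hF1c hF1cs) (intF i F2 hF2c hF2cs)]
    exact integral_congr_ae (Filter.Eventually.of_forall (fun x => hptwise x))
  have hz : (∫ x : R3, pd j f x * pd i g x) - (∫ x : R3, pd i f x * pd j g x) = 0 := by
    rw [split, this, zero1, zero2, sub_zero]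
  linarith

/-- the mollifier -/
def bump (n : ℕ) : ContDiffBump (0 : R3) :=
  ⟨((n : ℝ)+1)⁻¹/2, ((n:ℝ)+1)⁻¹, by positivity, half_lt_self (by positivity)⟩

lemma swap {f g : R3 → ℝ} (hf : ContDiff ℝ 1 f) (hcf : HasCompactSupport f)
    (hg : ContDiff ℝ 1 g) (hcg : HasCompactSupport g) (i j : Fin 3) :
    ∫ x : R3, pd j f x * pd i g x = ∫ x : R3, pd i f x * pd j g x := by
  classical
  set gn : ℕ → R3 → ℝ := fun n =>
    convolution ((bump n).normed volume) g (ContinuousLinearMap.lsmul ℝ ℝ) volume with hgn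
  have hgn2 : ∀ n, ContDiff ℝ 2 (gn n) := by
    intro n
    exact HasCompactSupport.contDiff_convolution_left (n := 2) (μ := volume)
      (ContinuousLinearMap.lsmul ℝ ℝ) ((bump n).hasCompactSupport_normed)
      ((bump n).contDiff_normed (n := 2)) (hg.continuous.locallyIntegrable)
  have hgncs : ∀ n, HasCompactSupport (gn n) := fun n =>
    HasCompactSupport.convolution (L := ContinuousLinearMap.lsmul ℝ ℝ) (μ := volume)
      ((bump n).hasCompactSupport_normed) hcg
  have hder : ∀ n (x : R3), fderiv ℝ (gn n) x
      = convolution ((bump n).normed volume) (fderiv ℝ g)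
          (ContinuousLinearMap.lsmul ℝ ℝ) volume x := by
    intro n x
    have h := HasCompactSupport.hasFDerivAt_convolution_right (μ := volume)
      (ContinuousLinearMap.lsmul ℝ ℝ) hcg
      (((bump n).integrable_normed).locallyIntegrable) hg x
    have hpre : (ContinuousLinearMap.lsmul ℝ ℝ).precompR R3
        = (ContinuousLinearMap.lsmul ℝ ℝ :
            ℝ →L[ℝ] (R3 →L[ℝ] ℝ) →L[ℝ] (R3 →L[ℝ] ℝ)) := rfl
    rw [hpre] at h
    exact h.fderiv
  -- uniform bound on ‖fderiv g‖
  obtain ⟨M, hM⟩ := (hg.continuous_fderiv one_ne_zero).bounded_above_of_compact_support (hcg.fderiv (𝕜 := ℝ))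
  have hM0 : 0 ≤ M := le_trans (norm_nonneg _) (hM 0)
  have hDbound : ∀ n (x : R3), ‖fderiv ℝ (gn n) x‖ ≤ M := by
    intro n x
    rw [hder n x, convolution_def]
    calc ‖∫ t : R3, (ContinuousLinearMap.lsmul ℝ ℝ) ((bump n).normed volume t)
          (fderiv ℝ g (x - t))‖
        ≤ ∫ t : R3, ‖(ContinuousLinearMap.lsmul ℝ ℝ) ((bump n).normed volume t)
          (fderiv ℝ g (x - t))‖ := norm_integral_le_integral_norm _
      _ ≤ ∫ t : R3, (bump n).normed volume t * M := by
          apply integral_mono_of_nonneg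
          · exact Filter.Eventually.of_forall (fun t => norm_nonneg _)
          · exact ((bump n).integrable_normed).mul_const M
          · apply Filter.Eventually.of_forall
            intro t
            simp only [ContinuousLinearMap.lsmul_apply, norm_smul, Real.norm_eq_abs,
              abs_of_nonneg ((bump n).nonneg_normed t)]
            exact mul_le_mul_of_nonneg_left (hM _) ((bump n).nonneg_normed t)
      _ = M := by rw [integral_mul_const, (bump n).integral_normed, one_mul]
  have htendD : ∀ x : R3, Filter.Tendsto (fun n => fderiv ℝ (gn n) x)
      Filter.atTop (nhds (fderiv ℝ g x)) := by
    intro x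
    have hrOut : Filter.Tendsto (fun n : ℕ => (bump n).rOut) Filter.atTop (nhds 0) := by
      have : Filter.Tendsto (fun n : ℕ => ((n:ℝ)+1)⁻¹) Filter.atTop (nhds 0) := by
        apply tendsto_inv_atTop_zero.comp
        exact Filter.tendsto_atTop_add_const_right _ 1 tendsto_natCast_atTop_atTop
      exact this
    have := ContDiffBump.convolution_tendsto_right_of_continuous (μ := volume)
      (φ := fun n : ℕ => bump n) hrOut (hg.continuous_fderiv one_ne_zero) x
    simp only [← hder] at this
    exact this
  -- dominated convergence on both sides
  have hbd : ∀ (a : Fin 3) (n : ℕ) (x : R3), ‖pd a (gn n) x‖ ≤ M := by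
    intro a n x
    calc ‖pd a (gn n) x‖ = ‖fderiv ℝ (gn n) x (Pi.single a 1)‖ := rfl
      _ ≤ ‖fderiv ℝ (gn n) x‖ * ‖(Pi.single a 1 : R3)‖ := ContinuousLinearMap.le_opNorm _ _
      _ ≤ M * 1 := by
          apply mul_le_mul (hDbound n x) _ (norm_nonneg _) hM0
          rw [Pi.norm_single]; norm_num
      _ = M := mul_one M
  have htendpd : ∀ (a : Fin 3) (x : R3), Filter.Tendsto (fun n => pd a (gn n) x)
      Filter.atTop (nhds (pd a g x)) := by
    intro a x
    have hcont : Continuous (fun L : R3 →L[ℝ] ℝ => L (Pi.single a 1)) :=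
      (ContinuousLinearMap.apply ℝ ℝ (Pi.single a 1 : R3)).continuous
    exact (hcont.tendsto _).comp (htendD x)
  have hdc : ∀ (a b : Fin 3), Filter.Tendsto (fun n => ∫ x : R3, pd a f x * pd b (gn n) x)
      Filter.atTop (nhds (∫ x : R3, pd a f x * pd b g x)) := by
    intro a b
    apply tendsto_integral_of_dominated_convergence (fun x => |pd a f x| * M)
    · intro n
      exact ((pd_continuous hf a).mul ((contDiff_pd (hgn2 n) b).continuous)).aestronglyMeasurable
    · exact (((pd_continuous hf a).abs).integrable_of_hasCompactSupport
        ((pd_hcs hcf a).abs)).mul_const M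
    · intro n
      apply Filter.Eventually.of_forall
      intro x
      rw [norm_mul]
      exact mul_le_mul_of_nonneg_left (hbd b n x) (abs_nonneg _)
    · apply Filter.Eventually.of_forall
      intro x
      exact (Filter.Tendsto.const_mul _ (htendpd b x))
  have heq : ∀ n, (∫ x : R3, pd j f x * pd i (gn n) x) = ∫ x : R3, pd i f x * pd j (gn n) x :=
    fun n => swap_smooth hf hcf (hgn2 n) (hgncs n) i j
  have h1 := hdc j i
  have h2 := hdc i j
  rw [show (fun n => ∫ x : R3, pd j f x * pd i (gn n) x)
      = (fun n => ∫ x : R3, pd i f x * pd j (gn n) x) from funext heq] at h1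
  exact tendsto_nhds_unique h1 h2

lemma tsupport_entry {u : R3 → R3} (i : Fin 3) :
    tsupport (fun y => u y i) ⊆ tsupport u := by
  apply closure_mono
  intro y hy
  simp only [Function.mem_support] at hy ⊢
  intro h0
  exact hy (by simp [h0])

lemma tsupport_entry2 {P : R3 → M3} (c d : Fin 3) :
    tsupport (fun y => P y c d) ⊆ tsupport P := by
  apply closure_mono
  intro y hy
  simp only [Function.mem_support] at hy ⊢
  intro h0
  exact hy (by simp [h0])

lemma two_fnormSq_symMat (M : M3) :
    2 * fnormSq (symMat M) = fnormSq M + ∑ i : Fin 3, ∑ j : Fin 3, M i j * M j i := by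
  simp only [fnormSq, finner, symMat, Fin.sum_univ_three]
  ring

/-- Korn's inequality for compactly supported C¹ vector fields. -/
lemma korn {u : R3 → R3} (hu : ContDiff ℝ 1 u) (hcu : HasCompactSupport u) :
    (∫ x : R3, fnormSq (jac u x)) ≤ 2 * ∫ x : R3, fnormSq (symMat (jac u x)) := by
  have hui : ∀ i, ContDiff ℝ 1 (fun y => u y i) := fun i => contDiff_pi.1 hu i
  have hcui : ∀ i, HasCompactSupport (fun y => u y i) := by
    intro i
    exact hcu.comp_left (g := fun v : R3 => v i) rfl
  have hjc : ∀ i j, Continuous (fun x => pd j (fun y => u y i) x) :=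
    fun i j => pd_continuous (hui i) j
  have hint : ∀ i j k l : Fin 3,
      Integrable (fun x : R3 => pd j (fun y => u y i) x * pd l (fun y => u y k) x) := by
    intro i j k l
    exact ((hjc i j).mul (hjc k l)).integrable_of_hasCompactSupport
      ((pd_hcs (hcui i) j).mul_right)
  have hswap : ∀ i j : Fin 3,
      (∫ x : R3, pd j (fun y => u y i) x * pd i (fun y => u y j) x)
        = ∫ x : R3, pd i (fun y => u y i) x * pd j (fun y => u y j) x :=
    fun i j => swap (hui i) (hcui i) (hui j) (hcui j) i j
  -- the cross term is a square
  have hcross : (0:ℝ) ≤ ∑ i : Fin 3, ∑ j : Fin 3,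
      ∫ x : R3, pd j (fun y => u y i) x * pd i (fun y => u y j) x := by
    rw [Finset.sum_congr rfl (fun i _ => Finset.sum_congr rfl (fun j _ => hswap i j))]
    have step : ∀ i : Fin 3, (∑ j : Fin 3,
        ∫ x : R3, pd i (fun y => u y i) x * pd j (fun y => u y j) x)
        = ∫ x : R3, ∑ j : Fin 3, pd i (fun y => u y i) x * pd j (fun y => u y j) x :=
      fun i => (integral_finset_sum _ (fun j _ => hint i i j j)).symm
    rw [Finset.sum_congr rfl (fun i _ => step i),
      ← integral_finset_sum _ (fun i _ => integrable_finset_sum _ (fun j _ => hint i i j j))]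
    have : ∀ x : R3, (∑ i : Fin 3, ∑ j : Fin 3,
        pd i (fun y => u y i) x * pd j (fun y => u y j) x)
        = (∑ i : Fin 3, pd i (fun y => u y i) x)^2 := by
      intro x
      rw [sq, Finset.sum_mul_sum]
    rw [integral_congr_ae (Filter.Eventually.of_forall this)]
    exact integral_nonneg (fun x => sq_nonneg _)
  -- put it together
  have hintf : Integrable (fun x : R3 => fnormSq (jac u x)) := by
    have : (fun x : R3 => fnormSq (jac u x)) = fun x : R3 =>
        ∑ i : Fin 3, ∑ j : Fin 3,
          pd j (fun y => u y i) x * pd j (fun y => u y i) x := rfl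
    rw [this]
    exact integrable_finset_sum _ (fun i _ => integrable_finset_sum _ (fun j _ => hint i j i j))
  have hsplit : (2:ℝ) * (∫ x : R3, fnormSq (symMat (jac u x)))
      = (∫ x : R3, fnormSq (jac u x)) + ∑ i : Fin 3, ∑ j : Fin 3,
          ∫ x : R3, pd j (fun y => u y i) x * pd i (fun y => u y j) x := by
    rw [← integral_const_mul]
    have hpt : ∀ x : R3, 2 * fnormSq (symMat (jac u x))
        = fnormSq (jac u x) + ∑ i : Fin 3, ∑ j : Fin 3,
            pd j (fun y => u y i) x * pd i (fun y => u y j) x :=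
      fun x => two_fnormSq_symMat (jac u x)
    rw [integral_congr_ae (Filter.Eventually.of_forall hpt)]
    rw [integral_add hintf (integrable_finset_sum _ (fun i _ => integrable_finset_sum _
      (fun j _ => hint i j j i)))]
    congr 1
    rw [integral_finset_sum _ (fun i _ => integrable_finset_sum _ (fun j _ => hint i j j i))]
    exact Finset.sum_congr rfl (fun i _ =>
      integral_finset_sum _ (fun j _ => hint i j j i))
  linarith



def Qs (S : M3) : ℝ :=
  2*(S 0 1 * S 0 1 + S 0 2 * S 0 2 + S 1 2 * S 1 2)
    - 2*(S 0 0 * S 1 1 + S 0 0 * S 2 2 + S 1 1 * S 2 2)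

def Wfun (P : R3 → M3) (x : R3) : ℝ :=
  ((-2) * (x 0 * CurlM P x 1 0 * P x 2 0)
      + (-2) * (x 0 * CurlM P x 1 1 * P x 2 1)
      + (-2) * (x 0 * CurlM P x 1 2 * P x 2 2)
      + 2 * (x 0 * CurlM P x 2 0 * P x 1 0)
      + 2 * (x 0 * CurlM P x 2 1 * P x 1 1)
      + 2 * (x 0 * CurlM P x 2 2 * P x 1 2)
      + 2 * (x 1 * CurlM P x 0 0 * P x 2 0)
      + 2 * (x 1 * CurlM P x 0 1 * P x 2 1)
      + 2 * (x 1 * CurlM P x 0 2 * P x 2 2)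
      + (-2) * (x 1 * CurlM P x 2 0 * P x 0 0)
      + (-2) * (x 1 * CurlM P x 2 1 * P x 0 1)
      + (-2) * (x 1 * CurlM P x 2 2 * P x 0 2)
      + (-2) * (x 2 * CurlM P x 0 0 * P x 1 0)
      + (-2) * (x 2 * CurlM P x 0 1 * P x 1 1)
      + (-2) * (x 2 * CurlM P x 0 2 * P x 1 2)
      + 2 * (x 2 * CurlM P x 1 0 * P x 0 0)
      + 2 * (x 2 * CurlM P x 1 1 * P x 0 1)
      + 2 * (x 2 * CurlM P x 1 2 * P x 0 2))
  + Qs (symMat (P x))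

def Dsum (P : R3 → M3) (x : R3) : ℝ :=
  ((2) * pd 0 (fun y => y 0 * (P y 1 1 * P y 2 2)) x
      + (-2) * pd 0 (fun y => y 0 * (P y 1 2 * P y 2 1)) x
      + (-2) * pd 1 (fun y => y 0 * (P y 1 0 * P y 2 2)) x
      + (2) * pd 1 (fun y => y 0 * (P y 1 2 * P y 2 0)) x
      + (2) * pd 2 (fun y => y 0 * (P y 1 0 * P y 2 1)) x
      + (-2) * pd 2 (fun y => y 0 * (P y 1 1 * P y 2 0)) x
      + (-2) * pd 0 (fun y => y 1 * (P y 0 1 * P y 2 2)) x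
      + (2) * pd 0 (fun y => y 1 * (P y 0 2 * P y 2 1)) x
      + (2) * pd 1 (fun y => y 1 * (P y 0 0 * P y 2 2)) x
      + (-2) * pd 1 (fun y => y 1 * (P y 0 2 * P y 2 0)) x
      + (-2) * pd 2 (fun y => y 1 * (P y 0 0 * P y 2 1)) x
      + (2) * pd 2 (fun y => y 1 * (P y 0 1 * P y 2 0)) x
      + (2) * pd 0 (fun y => y 2 * (P y 0 1 * P y 1 2)) x
      + (-2) * pd 0 (fun y => y 2 * (P y 0 2 * P y 1 1)) x
      + (-2) * pd 1 (fun y => y 2 * (P y 0 0 * P y 1 2)) x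
      + (2) * pd 1 (fun y => y 2 * (P y 0 2 * P y 1 0)) x
      + (2) * pd 2 (fun y => y 2 * (P y 0 0 * P y 1 1)) x
      + (-2) * pd 2 (fun y => y 2 * (P y 0 1 * P y 1 0)) x)

lemma entry_contDiff {P : R3 → M3} (hP : ContDiff ℝ 1 P) (c d : Fin 3) :
    ContDiff ℝ 1 (fun y => P y c d) := (contDiff_pi.1 (contDiff_pi.1 hP c)) d

lemma pd_triple {P : R3 → M3} (hP : ContDiff ℝ 1 P) (a b c d e f : Fin 3) (x : R3) :
    pd b (fun y => y a * (P y c d * P y e f)) x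
      = (Pi.single b 1 : R3) a * (P x c d * P x e f)
        + x a * (pd b (fun y => P y c d) x * P x e f
            + P x c d * pd b (fun y => P y e f) x) := by
  have hcd : DifferentiableAt ℝ (fun y => P y c d) x :=
    ((entry_contDiff hP c d).differentiable one_ne_zero) x
  have hef : DifferentiableAt ℝ (fun y => P y e f) x :=
    ((entry_contDiff hP e f).differentiable one_ne_zero) x
  have hco : DifferentiableAt ℝ (fun y : R3 => y a) x :=
    ((ContinuousLinearMap.proj a : R3 →L[ℝ] ℝ).differentiable).differentiableAt
  have h2 : pd b (fun y => y a * (P y c d * P y e f)) x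
      = pd b (fun y : R3 => y a) x * (P x c d * P x e f)
        + x a * pd b (fun y => P y c d * P y e f) x := pd_mul hco (hcd.mul hef) b
  have h1 : pd b (fun y => P y c d * P y e f) x
      = pd b (fun y => P y c d) x * P x e f + P x c d * pd b (fun y => P y e f) x :=
    pd_mul hcd hef b
  rw [h2, h1, pd_coord]

/-- the divergence-form certificate identity, pointwise -/
lemma cert_pointwise {P : R3 → M3} (hP : ContDiff ℝ 1 P) (x : R3) :
    fnormSq (skeww (P x)) = Dsum P x + Wfun P x := by
  unfold Dsum Wfun Qs
  simp only [pd_triple hP]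
  simp only [fnormSq, finner, skeww, symMat, CurlM, curlV, jac, Fin.sum_univ_three,
    Matrix.cons_val_zero, Matrix.cons_val_one, Matrix.head_cons, Matrix.cons_val_two,
    Matrix.tail_cons, Pi.single_apply]
  norm_num [Fin.ext_iff]
  ring


lemma fnormSq_nonneg (X : M3) : 0 ≤ fnormSq X := by
  show (0:ℝ) ≤ ∑ i : Fin 3, ∑ j : Fin 3, X i j * X i j
  exact Finset.sum_nonneg fun i _ => Finset.sum_nonneg fun j _ => mul_self_nonneg _

lemma entry_sq_le (X : M3) (i j : Fin 3) : (X i j)^2 ≤ fnormSq X := by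
  have h : X i j * X i j ≤ fnormSq X := by
    show X i j * X i j ≤ ∑ k : Fin 3, ∑ l : Fin 3, X k l * X k l
    calc X i j * X i j ≤ ∑ l : Fin 3, X i l * X i l :=
          Finset.single_le_sum (fun l _ => mul_self_nonneg (X i l)) (Finset.mem_univ j)
      _ ≤ ∑ k : Fin 3, ∑ l : Fin 3, X k l * X k l :=
          Finset.single_le_sum
            (fun k (_ : k ∈ Finset.univ) => Finset.sum_nonneg fun l _ => mul_self_nonneg (X k l))
            (Finset.mem_univ i)
  nlinarith [h]

lemma young {R xa t p : ℝ} (hx : |xa| ≤ R) :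
    |2*(xa*t*p)| ≤ 36*R^2*t^2 + p^2/36 := by
  have hR : 0 ≤ R := le_trans (abs_nonneg xa) hx
  have h1 : |2*(xa*t*p)| = 2*(|xa| * (|t| * |p|)) := by
    rw [abs_mul, abs_mul, abs_mul]
    norm_num
    ring
  have h2 : |xa| * (|t| * |p|) ≤ R*(|t| * |p|) :=
    mul_le_mul_of_nonneg_right hx (mul_nonneg (abs_nonneg t) (abs_nonneg p))
  nlinarith [sq_nonneg (6*R*|t| - |p|/6), sq_abs t, sq_abs p, abs_nonneg t, abs_nonneg p,
    mul_nonneg hR (abs_nonneg t)]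

lemma Qs_le (S : M3) : Qs S ≤ 2 * fnormSq S := by
  unfold Qs
  simp only [fnormSq, finner, Fin.sum_univ_three]
  nlinarith [sq_nonneg (S 0 0 + S 1 1), sq_nonneg (S 0 0 + S 2 2), sq_nonneg (S 1 1 + S 2 2),
    sq_nonneg (S 1 0), sq_nonneg (S 2 0), sq_nonneg (S 2 1)]

set_option maxHeartbeats 1000000 in
lemma Wfun_le {P : R3 → M3} {x : R3} {R : ℝ}
    (hx0 : |x 0| ≤ R) (hx1 : |x 1| ≤ R) (hx2 : |x 2| ≤ R) :
    Wfun P x ≤ 2 * fnormSq (symMat (P x)) + (1/2) * fnormSq (P x)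
      + 648*R^2 * fnormSq (CurlM P x) := by
  have h0 : (-2) * (x 0 * CurlM P x 1 0 * P x 2 0) ≤ 36*R^2 * fnormSq (CurlM P x) + fnormSq (P x)/36 := by
    have hy := young (xa := x 0) (t := CurlM P x 1 0) (p := P x 2 0) hx0
    have h1 := entry_sq_le (CurlM P x) 1 0
    have h2 := entry_sq_le (P x) 2 0
    have habs : (-2) * (x 0 * CurlM P x 1 0 * P x 2 0) ≤ |2*(x 0 * CurlM P x 1 0 * P x 2 0)| := by
      calc (-2) * (x 0 * CurlM P x 1 0 * P x 2 0) = -(2*(x 0 * CurlM P x 1 0 * P x 2 0)) := by ring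
        _ ≤ |2*(x 0 * CurlM P x 1 0 * P x 2 0)| := neg_le_abs _
    refine le_trans habs (le_trans hy ?_)
    nlinarith [sq_nonneg R]
  have h1 : (-2) * (x 0 * CurlM P x 1 1 * P x 2 1) ≤ 36*R^2 * fnormSq (CurlM P x) + fnormSq (P x)/36 := by
    have hy := young (xa := x 0) (t := CurlM P x 1 1) (p := P x 2 1) hx0
    have h1 := entry_sq_le (CurlM P x) 1 1
    have h2 := entry_sq_le (P x) 2 1
    have habs : (-2) * (x 0 * CurlM P x 1 1 * P x 2 1) ≤ |2*(x 0 * CurlM P x 1 1 * P x 2 1)| := by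
      calc (-2) * (x 0 * CurlM P x 1 1 * P x 2 1) = -(2*(x 0 * CurlM P x 1 1 * P x 2 1)) := by ring
        _ ≤ |2*(x 0 * CurlM P x 1 1 * P x 2 1)| := neg_le_abs _
    refine le_trans habs (le_trans hy ?_)
    nlinarith [sq_nonneg R]
  have h2 : (-2) * (x 0 * CurlM P x 1 2 * P x 2 2) ≤ 36*R^2 * fnormSq (CurlM P x) + fnormSq (P x)/36 := by
    have hy := young (xa := x 0) (t := CurlM P x 1 2) (p := P x 2 2) hx0
    have h1 := entry_sq_le (CurlM P x) 1 2
    have h2 := entry_sq_le (P x) 2 2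
    have habs : (-2) * (x 0 * CurlM P x 1 2 * P x 2 2) ≤ |2*(x 0 * CurlM P x 1 2 * P x 2 2)| := by
      calc (-2) * (x 0 * CurlM P x 1 2 * P x 2 2) = -(2*(x 0 * CurlM P x 1 2 * P x 2 2)) := by ring
        _ ≤ |2*(x 0 * CurlM P x 1 2 * P x 2 2)| := neg_le_abs _
    refine le_trans habs (le_trans hy ?_)
    nlinarith [sq_nonneg R]
  have h3 : 2 * (x 0 * CurlM P x 2 0 * P x 1 0) ≤ 36*R^2 * fnormSq (CurlM P x) + fnormSq (P x)/36 := by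
    have hy := young (xa := x 0) (t := CurlM P x 2 0) (p := P x 1 0) hx0
    have h1 := entry_sq_le (CurlM P x) 2 0
    have h2 := entry_sq_le (P x) 1 0
    have habs : 2 * (x 0 * CurlM P x 2 0 * P x 1 0) ≤ |2*(x 0 * CurlM P x 2 0 * P x 1 0)| := le_abs_self _
    refine le_trans habs (le_trans hy ?_)
    nlinarith [sq_nonneg R]
  have h4 : 2 * (x 0 * CurlM P x 2 1 * P x 1 1) ≤ 36*R^2 * fnormSq (CurlM P x) + fnormSq (P x)/36 := by
    have hy := young (xa := x 0) (t := CurlM P x 2 1) (p := P x 1 1) hx0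
    have h1 := entry_sq_le (CurlM P x) 2 1
    have h2 := entry_sq_le (P x) 1 1
    have habs : 2 * (x 0 * CurlM P x 2 1 * P x 1 1) ≤ |2*(x 0 * CurlM P x 2 1 * P x 1 1)| := le_abs_self _
    refine le_trans habs (le_trans hy ?_)
    nlinarith [sq_nonneg R]
  have h5 : 2 * (x 0 * CurlM P x 2 2 * P x 1 2) ≤ 36*R^2 * fnormSq (CurlM P x) + fnormSq (P x)/36 := by
    have hy := young (xa := x 0) (t := CurlM P x 2 2) (p := P x 1 2) hx0
    have h1 := entry_sq_le (CurlM P x) 2 2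
    have h2 := entry_sq_le (P x) 1 2
    have habs : 2 * (x 0 * CurlM P x 2 2 * P x 1 2) ≤ |2*(x 0 * CurlM P x 2 2 * P x 1 2)| := le_abs_self _
    refine le_trans habs (le_trans hy ?_)
    nlinarith [sq_nonneg R]
  have h6 : 2 * (x 1 * CurlM P x 0 0 * P x 2 0) ≤ 36*R^2 * fnormSq (CurlM P x) + fnormSq (P x)/36 := by
    have hy := young (xa := x 1) (t := CurlM P x 0 0) (p := P x 2 0) hx1
    have h1 := entry_sq_le (CurlM P x) 0 0
    have h2 := entry_sq_le (P x) 2 0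
    have habs : 2 * (x 1 * CurlM P x 0 0 * P x 2 0) ≤ |2*(x 1 * CurlM P x 0 0 * P x 2 0)| := le_abs_self _
    refine le_trans habs (le_trans hy ?_)
    nlinarith [sq_nonneg R]
  have h7 : 2 * (x 1 * CurlM P x 0 1 * P x 2 1) ≤ 36*R^2 * fnormSq (CurlM P x) + fnormSq (P x)/36 := by
    have hy := young (xa := x 1) (t := CurlM P x 0 1) (p := P x 2 1) hx1
    have h1 := entry_sq_le (CurlM P x) 0 1
    have h2 := entry_sq_le (P x) 2 1
    have habs : 2 * (x 1 * CurlM P x 0 1 * P x 2 1) ≤ |2*(x 1 * CurlM P x 0 1 * P x 2 1)| := le_abs_self _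
    refine le_trans habs (le_trans hy ?_)
    nlinarith [sq_nonneg R]
  have h8 : 2 * (x 1 * CurlM P x 0 2 * P x 2 2) ≤ 36*R^2 * fnormSq (CurlM P x) + fnormSq (P x)/36 := by
    have hy := young (xa := x 1) (t := CurlM P x 0 2) (p := P x 2 2) hx1
    have h1 := entry_sq_le (CurlM P x) 0 2
    have h2 := entry_sq_le (P x) 2 2
    have habs : 2 * (x 1 * CurlM P x 0 2 * P x 2 2) ≤ |2*(x 1 * CurlM P x 0 2 * P x 2 2)| := le_abs_self _
    refine le_trans habs (le_trans hy ?_)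
    nlinarith [sq_nonneg R]
  have h9 : (-2) * (x 1 * CurlM P x 2 0 * P x 0 0) ≤ 36*R^2 * fnormSq (CurlM P x) + fnormSq (P x)/36 := by
    have hy := young (xa := x 1) (t := CurlM P x 2 0) (p := P x 0 0) hx1
    have h1 := entry_sq_le (CurlM P x) 2 0
    have h2 := entry_sq_le (P x) 0 0
    have habs : (-2) * (x 1 * CurlM P x 2 0 * P x 0 0) ≤ |2*(x 1 * CurlM P x 2 0 * P x 0 0)| := by
      calc (-2) * (x 1 * CurlM P x 2 0 * P x 0 0) = -(2*(x 1 * CurlM P x 2 0 * P x 0 0)) := by ring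
        _ ≤ |2*(x 1 * CurlM P x 2 0 * P x 0 0)| := neg_le_abs _
    refine le_trans habs (le_trans hy ?_)
    nlinarith [sq_nonneg R]
  have h10 : (-2) * (x 1 * CurlM P x 2 1 * P x 0 1) ≤ 36*R^2 * fnormSq (CurlM P x) + fnormSq (P x)/36 := by
    have hy := young (xa := x 1) (t := CurlM P x 2 1) (p := P x 0 1) hx1
    have h1 := entry_sq_le (CurlM P x) 2 1
    have h2 := entry_sq_le (P x) 0 1
    have habs : (-2) * (x 1 * CurlM P x 2 1 * P x 0 1) ≤ |2*(x 1 * CurlM P x 2 1 * P x 0 1)| := by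
      calc (-2) * (x 1 * CurlM P x 2 1 * P x 0 1) = -(2*(x 1 * CurlM P x 2 1 * P x 0 1)) := by ring
        _ ≤ |2*(x 1 * CurlM P x 2 1 * P x 0 1)| := neg_le_abs _
    refine le_trans habs (le_trans hy ?_)
    nlinarith [sq_nonneg R]
  have h11 : (-2) * (x 1 * CurlM P x 2 2 * P x 0 2) ≤ 36*R^2 * fnormSq (CurlM P x) + fnormSq (P x)/36 := by
    have hy := young (xa := x 1) (t := CurlM P x 2 2) (p := P x 0 2) hx1
    have h1 := entry_sq_le (CurlM P x) 2 2
    have h2 := entry_sq_le (P x) 0 2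
    have habs : (-2) * (x 1 * CurlM P x 2 2 * P x 0 2) ≤ |2*(x 1 * CurlM P x 2 2 * P x 0 2)| := by
      calc (-2) * (x 1 * CurlM P x 2 2 * P x 0 2) = -(2*(x 1 * CurlM P x 2 2 * P x 0 2)) := by ring
        _ ≤ |2*(x 1 * CurlM P x 2 2 * P x 0 2)| := neg_le_abs _
    refine le_trans habs (le_trans hy ?_)
    nlinarith [sq_nonneg R]
  have h12 : (-2) * (x 2 * CurlM P x 0 0 * P x 1 0) ≤ 36*R^2 * fnormSq (CurlM P x) + fnormSq (P x)/36 := by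
    have hy := young (xa := x 2) (t := CurlM P x 0 0) (p := P x 1 0) hx2
    have h1 := entry_sq_le (CurlM P x) 0 0
    have h2 := entry_sq_le (P x) 1 0
    have habs : (-2) * (x 2 * CurlM P x 0 0 * P x 1 0) ≤ |2*(x 2 * CurlM P x 0 0 * P x 1 0)| := by
      calc (-2) * (x 2 * CurlM P x 0 0 * P x 1 0) = -(2*(x 2 * CurlM P x 0 0 * P x 1 0)) := by ring
        _ ≤ |2*(x 2 * CurlM P x 0 0 * P x 1 0)| := neg_le_abs _
    refine le_trans habs (le_trans hy ?_)
    nlinarith [sq_nonneg R]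
  have h13 : (-2) * (x 2 * CurlM P x 0 1 * P x 1 1) ≤ 36*R^2 * fnormSq (CurlM P x) + fnormSq (P x)/36 := by
    have hy := young (xa := x 2) (t := CurlM P x 0 1) (p := P x 1 1) hx2
    have h1 := entry_sq_le (CurlM P x) 0 1
    have h2 := entry_sq_le (P x) 1 1
    have habs : (-2) * (x 2 * CurlM P x 0 1 * P x 1 1) ≤ |2*(x 2 * CurlM P x 0 1 * P x 1 1)| := by
      calc (-2) * (x 2 * CurlM P x 0 1 * P x 1 1) = -(2*(x 2 * CurlM P x 0 1 * P x 1 1)) := by ring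
        _ ≤ |2*(x 2 * CurlM P x 0 1 * P x 1 1)| := neg_le_abs _
    refine le_trans habs (le_trans hy ?_)
    nlinarith [sq_nonneg R]
  have h14 : (-2) * (x 2 * CurlM P x 0 2 * P x 1 2) ≤ 36*R^2 * fnormSq (CurlM P x) + fnormSq (P x)/36 := by
    have hy := young (xa := x 2) (t := CurlM P x 0 2) (p := P x 1 2) hx2
    have h1 := entry_sq_le (CurlM P x) 0 2
    have h2 := entry_sq_le (P x) 1 2
    have habs : (-2) * (x 2 * CurlM P x 0 2 * P x 1 2) ≤ |2*(x 2 * CurlM P x 0 2 * P x 1 2)| := by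
      calc (-2) * (x 2 * CurlM P x 0 2 * P x 1 2) = -(2*(x 2 * CurlM P x 0 2 * P x 1 2)) := by ring
        _ ≤ |2*(x 2 * CurlM P x 0 2 * P x 1 2)| := neg_le_abs _
    refine le_trans habs (le_trans hy ?_)
    nlinarith [sq_nonneg R]
  have h15 : 2 * (x 2 * CurlM P x 1 0 * P x 0 0) ≤ 36*R^2 * fnormSq (CurlM P x) + fnormSq (P x)/36 := by
    have hy := young (xa := x 2) (t := CurlM P x 1 0) (p := P x 0 0) hx2
    have h1 := entry_sq_le (CurlM P x) 1 0
    have h2 := entry_sq_le (P x) 0 0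
    have habs : 2 * (x 2 * CurlM P x 1 0 * P x 0 0) ≤ |2*(x 2 * CurlM P x 1 0 * P x 0 0)| := le_abs_self _
    refine le_trans habs (le_trans hy ?_)
    nlinarith [sq_nonneg R]
  have h16 : 2 * (x 2 * CurlM P x 1 1 * P x 0 1) ≤ 36*R^2 * fnormSq (CurlM P x) + fnormSq (P x)/36 := by
    have hy := young (xa := x 2) (t := CurlM P x 1 1) (p := P x 0 1) hx2
    have h1 := entry_sq_le (CurlM P x) 1 1
    have h2 := entry_sq_le (P x) 0 1
    have habs : 2 * (x 2 * CurlM P x 1 1 * P x 0 1) ≤ |2*(x 2 * CurlM P x 1 1 * P x 0 1)| := le_abs_self _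
    refine le_trans habs (le_trans hy ?_)
    nlinarith [sq_nonneg R]
  have h17 : 2 * (x 2 * CurlM P x 1 2 * P x 0 2) ≤ 36*R^2 * fnormSq (CurlM P x) + fnormSq (P x)/36 := by
    have hy := young (xa := x 2) (t := CurlM P x 1 2) (p := P x 0 2) hx2
    have h1 := entry_sq_le (CurlM P x) 1 2
    have h2 := entry_sq_le (P x) 0 2
    have habs : 2 * (x 2 * CurlM P x 1 2 * P x 0 2) ≤ |2*(x 2 * CurlM P x 1 2 * P x 0 2)| := le_abs_self _
    refine le_trans habs (le_trans hy ?_)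
    nlinarith [sq_nonneg R]
  have hQ := Qs_le (symMat (P x))
  unfold Wfun
  linarith


section K2sec
variable {P : R3 → M3}

lemma triple_contDiff (hP : ContDiff ℝ 1 P) (a c d e f : Fin 3) :
    ContDiff ℝ 1 (fun y : R3 => y a * (P y c d * P y e f)) :=
  ((ContinuousLinearMap.proj a : R3 →L[ℝ] ℝ).contDiff).mul
    ((entry_contDiff hP c d).mul (entry_contDiff hP e f))

lemma triple_hcs (hcP : HasCompactSupport P) (a c d e f : Fin 3) :
    HasCompactSupport (fun y : R3 => y a * (P y c d * P y e f)) := by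
  have h1 : HasCompactSupport (fun y => P y c d) :=
    hcP.comp_left (g := fun M : M3 => M c d) rfl
  have h2 : HasCompactSupport (fun y => P y c d * P y e f) := h1.mul_right
  exact h2.mul_left

lemma Dsum_integral_zero (hP : ContDiff ℝ 1 P) (hcP : HasCompactSupport P) :
    (∫ x : R3, Dsum P x) = 0 := by
  have hit : ∀ (co : ℝ) (a b c d e f : Fin 3),
      Integrable (fun x : R3 => (co) * pd b (fun y => y a * (P y c d * P y e f)) x) :=
    fun co a b c d e f =>
      ((pd_continuous (triple_contDiff hP a c d e f) b).integrable_of_hasCompactSupport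
        (pd_hcs (triple_hcs hcP a c d e f) b)).const_mul co
  have hz : ∀ (co : ℝ) (a b c d e f : Fin 3),
      (∫ x : R3, (co) * pd b (fun y => y a * (P y c d * P y e f)) x) = 0 := by
    intro co a b c d e f
    rw [integral_const_mul,
      integral_pd_eq_zero (triple_contDiff hP a c d e f) (triple_hcs hcP a c d e f) b]
    ring
  have hpre0 : Integrable (fun x : R3 => (2) * pd 0 (fun y => y 0 * (P y 1 1 * P y 2 2)) x) := hit (2) 0 0 1 1 2 2
  have hpre1 : Integrable (fun x : R3 => (2) * pd 0 (fun y => y 0 * (P y 1 1 * P y 2 2)) x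
      + (-2) * pd 0 (fun y => y 0 * (P y 1 2 * P y 2 1)) x) := hpre0.add (hit (-2) 0 0 1 2 2 1)
  have hpre2 : Integrable (fun x : R3 => (2) * pd 0 (fun y => y 0 * (P y 1 1 * P y 2 2)) x
      + (-2) * pd 0 (fun y => y 0 * (P y 1 2 * P y 2 1)) x
      + (-2) * pd 1 (fun y => y 0 * (P y 1 0 * P y 2 2)) x) := hpre1.add (hit (-2) 0 1 1 0 2 2)
  have hpre3 : Integrable (fun x : R3 => (2) * pd 0 (fun y => y 0 * (P y 1 1 * P y 2 2)) x
      + (-2) * pd 0 (fun y => y 0 * (P y 1 2 * P y 2 1)) x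
      + (-2) * pd 1 (fun y => y 0 * (P y 1 0 * P y 2 2)) x
      + (2) * pd 1 (fun y => y 0 * (P y 1 2 * P y 2 0)) x) := hpre2.add (hit (2) 0 1 1 2 2 0)
  have hpre4 : Integrable (fun x : R3 => (2) * pd 0 (fun y => y 0 * (P y 1 1 * P y 2 2)) x
      + (-2) * pd 0 (fun y => y 0 * (P y 1 2 * P y 2 1)) x
      + (-2) * pd 1 (fun y => y 0 * (P y 1 0 * P y 2 2)) x
      + (2) * pd 1 (fun y => y 0 * (P y 1 2 * P y 2 0)) x
      + (2) * pd 2 (fun y => y 0 * (P y 1 0 * P y 2 1)) x) := hpre3.add (hit (2) 0 2 1 0 2 1)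
  have hpre5 : Integrable (fun x : R3 => (2) * pd 0 (fun y => y 0 * (P y 1 1 * P y 2 2)) x
      + (-2) * pd 0 (fun y => y 0 * (P y 1 2 * P y 2 1)) x
      + (-2) * pd 1 (fun y => y 0 * (P y 1 0 * P y 2 2)) x
      + (2) * pd 1 (fun y => y 0 * (P y 1 2 * P y 2 0)) x
      + (2) * pd 2 (fun y => y 0 * (P y 1 0 * P y 2 1)) x
      + (-2) * pd 2 (fun y => y 0 * (P y 1 1 * P y 2 0)) x) := hpre4.add (hit (-2) 0 2 1 1 2 0)
  have hpre6 : Integrable (fun x : R3 => (2) * pd 0 (fun y => y 0 * (P y 1 1 * P y 2 2)) x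
      + (-2) * pd 0 (fun y => y 0 * (P y 1 2 * P y 2 1)) x
      + (-2) * pd 1 (fun y => y 0 * (P y 1 0 * P y 2 2)) x
      + (2) * pd 1 (fun y => y 0 * (P y 1 2 * P y 2 0)) x
      + (2) * pd 2 (fun y => y 0 * (P y 1 0 * P y 2 1)) x
      + (-2) * pd 2 (fun y => y 0 * (P y 1 1 * P y 2 0)) x
      + (-2) * pd 0 (fun y => y 1 * (P y 0 1 * P y 2 2)) x) := hpre5.add (hit (-2) 1 0 0 1 2 2)
  have hpre7 : Integrable (fun x : R3 => (2) * pd 0 (fun y => y 0 * (P y 1 1 * P y 2 2)) x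
      + (-2) * pd 0 (fun y => y 0 * (P y 1 2 * P y 2 1)) x
      + (-2) * pd 1 (fun y => y 0 * (P y 1 0 * P y 2 2)) x
      + (2) * pd 1 (fun y => y 0 * (P y 1 2 * P y 2 0)) x
      + (2) * pd 2 (fun y => y 0 * (P y 1 0 * P y 2 1)) x
      + (-2) * pd 2 (fun y => y 0 * (P y 1 1 * P y 2 0)) x
      + (-2) * pd 0 (fun y => y 1 * (P y 0 1 * P y 2 2)) x
      + (2) * pd 0 (fun y => y 1 * (P y 0 2 * P y 2 1)) x) := hpre6.add (hit (2) 1 0 0 2 2 1)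
  have hpre8 : Integrable (fun x : R3 => (2) * pd 0 (fun y => y 0 * (P y 1 1 * P y 2 2)) x
      + (-2) * pd 0 (fun y => y 0 * (P y 1 2 * P y 2 1)) x
      + (-2) * pd 1 (fun y => y 0 * (P y 1 0 * P y 2 2)) x
      + (2) * pd 1 (fun y => y 0 * (P y 1 2 * P y 2 0)) x
      + (2) * pd 2 (fun y => y 0 * (P y 1 0 * P y 2 1)) x
      + (-2) * pd 2 (fun y => y 0 * (P y 1 1 * P y 2 0)) x
      + (-2) * pd 0 (fun y => y 1 * (P y 0 1 * P y 2 2)) x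
      + (2) * pd 0 (fun y => y 1 * (P y 0 2 * P y 2 1)) x
      + (2) * pd 1 (fun y => y 1 * (P y 0 0 * P y 2 2)) x) := hpre7.add (hit (2) 1 1 0 0 2 2)
  have hpre9 : Integrable (fun x : R3 => (2) * pd 0 (fun y => y 0 * (P y 1 1 * P y 2 2)) x
      + (-2) * pd 0 (fun y => y 0 * (P y 1 2 * P y 2 1)) x
      + (-2) * pd 1 (fun y => y 0 * (P y 1 0 * P y 2 2)) x
      + (2) * pd 1 (fun y => y 0 * (P y 1 2 * P y 2 0)) x
      + (2) * pd 2 (fun y => y 0 * (P y 1 0 * P y 2 1)) x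
      + (-2) * pd 2 (fun y => y 0 * (P y 1 1 * P y 2 0)) x
      + (-2) * pd 0 (fun y => y 1 * (P y 0 1 * P y 2 2)) x
      + (2) * pd 0 (fun y => y 1 * (P y 0 2 * P y 2 1)) x
      + (2) * pd 1 (fun y => y 1 * (P y 0 0 * P y 2 2)) x
      + (-2) * pd 1 (fun y => y 1 * (P y 0 2 * P y 2 0)) x) := hpre8.add (hit (-2) 1 1 0 2 2 0)
  have hpre10 : Integrable (fun x : R3 => (2) * pd 0 (fun y => y 0 * (P y 1 1 * P y 2 2)) x
      + (-2) * pd 0 (fun y => y 0 * (P y 1 2 * P y 2 1)) x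
      + (-2) * pd 1 (fun y => y 0 * (P y 1 0 * P y 2 2)) x
      + (2) * pd 1 (fun y => y 0 * (P y 1 2 * P y 2 0)) x
      + (2) * pd 2 (fun y => y 0 * (P y 1 0 * P y 2 1)) x
      + (-2) * pd 2 (fun y => y 0 * (P y 1 1 * P y 2 0)) x
      + (-2) * pd 0 (fun y => y 1 * (P y 0 1 * P y 2 2)) x
      + (2) * pd 0 (fun y => y 1 * (P y 0 2 * P y 2 1)) x
      + (2) * pd 1 (fun y => y 1 * (P y 0 0 * P y 2 2)) x
      + (-2) * pd 1 (fun y => y 1 * (P y 0 2 * P y 2 0)) x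
      + (-2) * pd 2 (fun y => y 1 * (P y 0 0 * P y 2 1)) x) := hpre9.add (hit (-2) 1 2 0 0 2 1)
  have hpre11 : Integrable (fun x : R3 => (2) * pd 0 (fun y => y 0 * (P y 1 1 * P y 2 2)) x
      + (-2) * pd 0 (fun y => y 0 * (P y 1 2 * P y 2 1)) x
      + (-2) * pd 1 (fun y => y 0 * (P y 1 0 * P y 2 2)) x
      + (2) * pd 1 (fun y => y 0 * (P y 1 2 * P y 2 0)) x
      + (2) * pd 2 (fun y => y 0 * (P y 1 0 * P y 2 1)) x
      + (-2) * pd 2 (fun y => y 0 * (P y 1 1 * P y 2 0)) x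
      + (-2) * pd 0 (fun y => y 1 * (P y 0 1 * P y 2 2)) x
      + (2) * pd 0 (fun y => y 1 * (P y 0 2 * P y 2 1)) x
      + (2) * pd 1 (fun y => y 1 * (P y 0 0 * P y 2 2)) x
      + (-2) * pd 1 (fun y => y 1 * (P y 0 2 * P y 2 0)) x
      + (-2) * pd 2 (fun y => y 1 * (P y 0 0 * P y 2 1)) x
      + (2) * pd 2 (fun y => y 1 * (P y 0 1 * P y 2 0)) x) := hpre10.add (hit (2) 1 2 0 1 2 0)
  have hpre12 : Integrable (fun x : R3 => (2) * pd 0 (fun y => y 0 * (P y 1 1 * P y 2 2)) x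
      + (-2) * pd 0 (fun y => y 0 * (P y 1 2 * P y 2 1)) x
      + (-2) * pd 1 (fun y => y 0 * (P y 1 0 * P y 2 2)) x
      + (2) * pd 1 (fun y => y 0 * (P y 1 2 * P y 2 0)) x
      + (2) * pd 2 (fun y => y 0 * (P y 1 0 * P y 2 1)) x
      + (-2) * pd 2 (fun y => y 0 * (P y 1 1 * P y 2 0)) x
      + (-2) * pd 0 (fun y => y 1 * (P y 0 1 * P y 2 2)) x
      + (2) * pd 0 (fun y => y 1 * (P y 0 2 * P y 2 1)) x
      + (2) * pd 1 (fun y => y 1 * (P y 0 0 * P y 2 2)) x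
      + (-2) * pd 1 (fun y => y 1 * (P y 0 2 * P y 2 0)) x
      + (-2) * pd 2 (fun y => y 1 * (P y 0 0 * P y 2 1)) x
      + (2) * pd 2 (fun y => y 1 * (P y 0 1 * P y 2 0)) x
      + (2) * pd 0 (fun y => y 2 * (P y 0 1 * P y 1 2)) x) := hpre11.add (hit (2) 2 0 0 1 1 2)
  have hpre13 : Integrable (fun x : R3 => (2) * pd 0 (fun y => y 0 * (P y 1 1 * P y 2 2)) x
      + (-2) * pd 0 (fun y => y 0 * (P y 1 2 * P y 2 1)) x
      + (-2) * pd 1 (fun y => y 0 * (P y 1 0 * P y 2 2)) x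
      + (2) * pd 1 (fun y => y 0 * (P y 1 2 * P y 2 0)) x
      + (2) * pd 2 (fun y => y 0 * (P y 1 0 * P y 2 1)) x
      + (-2) * pd 2 (fun y => y 0 * (P y 1 1 * P y 2 0)) x
      + (-2) * pd 0 (fun y => y 1 * (P y 0 1 * P y 2 2)) x
      + (2) * pd 0 (fun y => y 1 * (P y 0 2 * P y 2 1)) x
      + (2) * pd 1 (fun y => y 1 * (P y 0 0 * P y 2 2)) x
      + (-2) * pd 1 (fun y => y 1 * (P y 0 2 * P y 2 0)) x
      + (-2) * pd 2 (fun y => y 1 * (P y 0 0 * P y 2 1)) x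
      + (2) * pd 2 (fun y => y 1 * (P y 0 1 * P y 2 0)) x
      + (2) * pd 0 (fun y => y 2 * (P y 0 1 * P y 1 2)) x
      + (-2) * pd 0 (fun y => y 2 * (P y 0 2 * P y 1 1)) x) := hpre12.add (hit (-2) 2 0 0 2 1 1)
  have hpre14 : Integrable (fun x : R3 => (2) * pd 0 (fun y => y 0 * (P y 1 1 * P y 2 2)) x
      + (-2) * pd 0 (fun y => y 0 * (P y 1 2 * P y 2 1)) x
      + (-2) * pd 1 (fun y => y 0 * (P y 1 0 * P y 2 2)) x
      + (2) * pd 1 (fun y => y 0 * (P y 1 2 * P y 2 0)) x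
      + (2) * pd 2 (fun y => y 0 * (P y 1 0 * P y 2 1)) x
      + (-2) * pd 2 (fun y => y 0 * (P y 1 1 * P y 2 0)) x
      + (-2) * pd 0 (fun y => y 1 * (P y 0 1 * P y 2 2)) x
      + (2) * pd 0 (fun y => y 1 * (P y 0 2 * P y 2 1)) x
      + (2) * pd 1 (fun y => y 1 * (P y 0 0 * P y 2 2)) x
      + (-2) * pd 1 (fun y => y 1 * (P y 0 2 * P y 2 0)) x
      + (-2) * pd 2 (fun y => y 1 * (P y 0 0 * P y 2 1)) x
      + (2) * pd 2 (fun y => y 1 * (P y 0 1 * P y 2 0)) x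
      + (2) * pd 0 (fun y => y 2 * (P y 0 1 * P y 1 2)) x
      + (-2) * pd 0 (fun y => y 2 * (P y 0 2 * P y 1 1)) x
      + (-2) * pd 1 (fun y => y 2 * (P y 0 0 * P y 1 2)) x) := hpre13.add (hit (-2) 2 1 0 0 1 2)
  have hpre15 : Integrable (fun x : R3 => (2) * pd 0 (fun y => y 0 * (P y 1 1 * P y 2 2)) x
      + (-2) * pd 0 (fun y => y 0 * (P y 1 2 * P y 2 1)) x
      + (-2) * pd 1 (fun y => y 0 * (P y 1 0 * P y 2 2)) x
      + (2) * pd 1 (fun y => y 0 * (P y 1 2 * P y 2 0)) x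
      + (2) * pd 2 (fun y => y 0 * (P y 1 0 * P y 2 1)) x
      + (-2) * pd 2 (fun y => y 0 * (P y 1 1 * P y 2 0)) x
      + (-2) * pd 0 (fun y => y 1 * (P y 0 1 * P y 2 2)) x
      + (2) * pd 0 (fun y => y 1 * (P y 0 2 * P y 2 1)) x
      + (2) * pd 1 (fun y => y 1 * (P y 0 0 * P y 2 2)) x
      + (-2) * pd 1 (fun y => y 1 * (P y 0 2 * P y 2 0)) x
      + (-2) * pd 2 (fun y => y 1 * (P y 0 0 * P y 2 1)) x
      + (2) * pd 2 (fun y => y 1 * (P y 0 1 * P y 2 0)) x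
      + (2) * pd 0 (fun y => y 2 * (P y 0 1 * P y 1 2)) x
      + (-2) * pd 0 (fun y => y 2 * (P y 0 2 * P y 1 1)) x
      + (-2) * pd 1 (fun y => y 2 * (P y 0 0 * P y 1 2)) x
      + (2) * pd 1 (fun y => y 2 * (P y 0 2 * P y 1 0)) x) := hpre14.add (hit (2) 2 1 0 2 1 0)
  have hpre16 : Integrable (fun x : R3 => (2) * pd 0 (fun y => y 0 * (P y 1 1 * P y 2 2)) x
      + (-2) * pd 0 (fun y => y 0 * (P y 1 2 * P y 2 1)) x
      + (-2) * pd 1 (fun y => y 0 * (P y 1 0 * P y 2 2)) x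
      + (2) * pd 1 (fun y => y 0 * (P y 1 2 * P y 2 0)) x
      + (2) * pd 2 (fun y => y 0 * (P y 1 0 * P y 2 1)) x
      + (-2) * pd 2 (fun y => y 0 * (P y 1 1 * P y 2 0)) x
      + (-2) * pd 0 (fun y => y 1 * (P y 0 1 * P y 2 2)) x
      + (2) * pd 0 (fun y => y 1 * (P y 0 2 * P y 2 1)) x
      + (2) * pd 1 (fun y => y 1 * (P y 0 0 * P y 2 2)) x
      + (-2) * pd 1 (fun y => y 1 * (P y 0 2 * P y 2 0)) x
      + (-2) * pd 2 (fun y => y 1 * (P y 0 0 * P y 2 1)) x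
      + (2) * pd 2 (fun y => y 1 * (P y 0 1 * P y 2 0)) x
      + (2) * pd 0 (fun y => y 2 * (P y 0 1 * P y 1 2)) x
      + (-2) * pd 0 (fun y => y 2 * (P y 0 2 * P y 1 1)) x
      + (-2) * pd 1 (fun y => y 2 * (P y 0 0 * P y 1 2)) x
      + (2) * pd 1 (fun y => y 2 * (P y 0 2 * P y 1 0)) x
      + (2) * pd 2 (fun y => y 2 * (P y 0 0 * P y 1 1)) x) := hpre15.add (hit (2) 2 2 0 0 1 1)
  unfold Dsum
  rw [integral_add hpre16 (hit (-2) 2 2 0 1 1 0),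
      integral_add hpre15 (hit (2) 2 2 0 0 1 1),
      integral_add hpre14 (hit (2) 2 1 0 2 1 0),
      integral_add hpre13 (hit (-2) 2 1 0 0 1 2),
      integral_add hpre12 (hit (-2) 2 0 0 2 1 1),
      integral_add hpre11 (hit (2) 2 0 0 1 1 2),
      integral_add hpre10 (hit (2) 1 2 0 1 2 0),
      integral_add hpre9 (hit (-2) 1 2 0 0 2 1),
      integral_add hpre8 (hit (-2) 1 1 0 2 2 0),
      integral_add hpre7 (hit (2) 1 1 0 0 2 2),
      integral_add hpre6 (hit (2) 1 0 0 2 2 1),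
      integral_add hpre5 (hit (-2) 1 0 0 1 2 2),
      integral_add hpre4 (hit (-2) 0 2 1 1 2 0),
      integral_add hpre3 (hit (2) 0 2 1 0 2 1),
      integral_add hpre2 (hit (2) 0 1 1 2 2 0),
      integral_add hpre1 (hit (-2) 0 1 1 0 2 2),
      integral_add hpre0 (hit (-2) 0 0 1 2 2 1)]
  simp only [hz]
  norm_num

lemma fnormSq_decomp (M : M3) : fnormSq M = fnormSq (symMat M) + fnormSq (skeww M) := by
  simp only [fnormSq, finner, symMat, skeww, Fin.sum_univ_three]
  ring

set_option maxHeartbeats 1000000 in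
/-- the incompatible Korn inequality for compactly supported C¹ matrix fields -/
lemma k2 (hP : ContDiff ℝ 1 P) (hcP : HasCompactSupport P) {R : ℝ} (hR0 : 0 ≤ R)
    (hsup : tsupport P ⊆ Metric.closedBall 0 R) :
    (∫ x : R3, fnormSq (P x))
      ≤ 6 * (∫ x : R3, fnormSq (symMat (P x)))
        + 1296 * R^2 * ∫ x : R3, fnormSq (CurlM P x) := by
  have hc2 : ∀ c d : Fin 3, Continuous fun x => P x c d :=
    fun c d => (entry_contDiff hP c d).continuous
  have hpdc : ∀ (b c d : Fin 3), Continuous fun x => pd b (fun y => P y c d) x :=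
    fun b c d => pd_continuous (entry_contDiff hP c d) b
  have hvan : ∀ x, x ∉ tsupport P →
      (∀ c d, P x c d = 0) ∧ (∀ b c d, pd b (fun y => P y c d) x = 0) := by
    intro x hx
    constructor
    · intro c d
      have h0 : P x = 0 := image_eq_zero_of_notMem_tsupport hx
      rw [h0]; rfl
    · intro b c d
      exact pd_eq_zero_of_notMem (fun h => hx (tsupport_entry2 c d h)) b
  -- continuity of the integrands
  have hcP2 : Continuous fun x => fnormSq (P x) := by
    have : (fun x => fnormSq (P x))
        = fun x => ∑ i : Fin 3, ∑ j : Fin 3, P x i j * P x i j := rfl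
    rw [this]
    exact continuous_finset_sum _ fun i _ => continuous_finset_sum _ fun j _ =>
      (hc2 i j).mul (hc2 i j)
  have hcSym : Continuous fun x => fnormSq (symMat (P x)) := by
    have : (fun x => fnormSq (symMat (P x)))
        = fun x => ∑ i : Fin 3, ∑ j : Fin 3,
            ((P x i j + P x j i)/2) * ((P x i j + P x j i)/2) := rfl
    rw [this]
    exact continuous_finset_sum _ fun i _ => continuous_finset_sum _ fun j _ =>
      (((hc2 i j).add (hc2 j i)).div_const 2).mul (((hc2 i j).add (hc2 j i)).div_const 2)
  have hcSkew : Continuous fun x => fnormSq (skeww (P x)) := by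
    have : (fun x => fnormSq (skeww (P x)))
        = fun x => ∑ i : Fin 3, ∑ j : Fin 3,
            ((P x i j - P x j i)/2) * ((P x i j - P x j i)/2) := rfl
    rw [this]
    exact continuous_finset_sum _ fun i _ => continuous_finset_sum _ fun j _ =>
      (((hc2 i j).sub (hc2 j i)).div_const 2).mul (((hc2 i j).sub (hc2 j i)).div_const 2)
  have hcurlE : ∀ c k : Fin 3, Continuous fun x => CurlM P x c k := by
    intro c k
    match k with
    | 0 =>
      have : (fun x => CurlM P x c 0)
          = fun x => pd 1 (fun y => P y c 2) x - pd 2 (fun y => P y c 1) x := by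
        funext x; simp [CurlM, curlV]
      rw [this]; exact (hpdc 1 c 2).sub (hpdc 2 c 1)
    | 1 =>
      have : (fun x => CurlM P x c 1)
          = fun x => pd 2 (fun y => P y c 0) x - pd 0 (fun y => P y c 2) x := by
        funext x; simp [CurlM, curlV]
      rw [this]; exact (hpdc 2 c 0).sub (hpdc 0 c 2)
    | 2 =>
      have : (fun x => CurlM P x c 2)
          = fun x => pd 0 (fun y => P y c 1) x - pd 1 (fun y => P y c 0) x := by
        funext x; simp [CurlM, curlV]
      rw [this]; exact (hpdc 0 c 1).sub (hpdc 1 c 0)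
  have hcCurl : Continuous fun x => fnormSq (CurlM P x) := by
    have : (fun x => fnormSq (CurlM P x))
        = fun x => ∑ i : Fin 3, ∑ j : Fin 3, CurlM P x i j * CurlM P x i j := rfl
    rw [this]
    exact continuous_finset_sum _ fun i _ => continuous_finset_sum _ fun j _ =>
      (hcurlE i j).mul (hcurlE i j)
  have hcW : Continuous (Wfun P) := by
    unfold Wfun Qs
    simp only [symMat]
    fun_prop
  -- integrability via compact support
  have mkInt : ∀ (f : R3 → ℝ), Continuous f → (∀ x, x ∉ tsupport P → f x = 0) →
      Integrable f := fun f hf h0 =>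
    hf.integrable_of_hasCompactSupport (HasCompactSupport.intro hcP h0)
  have iP : Integrable (fun x => fnormSq (P x)) :=
    mkInt _ hcP2 (fun x hx => by
      simp [fnormSq, finner, (hvan x hx).1])
  have iSym : Integrable (fun x => fnormSq (symMat (P x))) :=
    mkInt _ hcSym (fun x hx => by
      simp [fnormSq, finner, symMat, (hvan x hx).1])
  have iSkew : Integrable (fun x => fnormSq (skeww (P x))) :=
    mkInt _ hcSkew (fun x hx => by
      simp [fnormSq, finner, skeww, (hvan x hx).1])
  have iCurl : Integrable (fun x => fnormSq (CurlM P x)) :=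
    mkInt _ hcCurl (fun x hx => by
      simp [fnormSq, finner, CurlM, curlV, (hvan x hx).2, Fin.sum_univ_three])
  have iW : Integrable (Wfun P) :=
    mkInt _ hcW (fun x hx => by
      simp [Wfun, Qs, symMat, CurlM, curlV, (hvan x hx).1, (hvan x hx).2])
  -- the certificate in integral form
  have iD : Integrable (fun x => Dsum P x) := by
    have : (fun x => Dsum P x) = fun x => fnormSq (skeww (P x)) - Wfun P x := by
      funext x
      have := cert_pointwise hP x
      linarith
    rw [this]
    exact iSkew.sub iW
  have hskewW : (∫ x : R3, fnormSq (skeww (P x))) = ∫ x : R3, Wfun P x := by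
    have h1 : (∫ x : R3, fnormSq (skeww (P x)))
        = ∫ x : R3, (Dsum P x + Wfun P x) :=
      integral_congr_ae (Filter.Eventually.of_forall (fun x => cert_pointwise hP x))
    rw [h1, integral_add iD iW, Dsum_integral_zero hP hcP, zero_add]
  -- bound the W integral
  have hW_le : (∫ x : R3, Wfun P x)
      ≤ ∫ x : R3, (2 * fnormSq (symMat (P x)) + (1/2) * fnormSq (P x)
          + 648*R^2 * fnormSq (CurlM P x)) := by
    apply integral_mono iW
    · exact ((iSym.const_mul 2).add (iP.const_mul (1/2))).add (iCurl.const_mul _)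
    · intro x
      by_cases hx : x ∈ tsupport P
      · have hnorm : ‖x‖ ≤ R := by
          have := hsup hx
          simpa [Metric.mem_closedBall, dist_zero_right] using this
        have habs : ∀ a : Fin 3, |x a| ≤ R := by
          intro a
          calc |x a| = ‖x a‖ := (Real.norm_eq_abs _).symm
            _ ≤ ‖x‖ := norm_le_pi_norm x a
            _ ≤ R := hnorm
        exact Wfun_le (habs 0) (habs 1) (habs 2)
      · have hz1 : Wfun P x = 0 := by
          simp [Wfun, Qs, symMat, CurlM, curlV, (hvan x hx).1, (hvan x hx).2]
        rw [hz1]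
        have n1 := fnormSq_nonneg (symMat (P x))
        have n2 := fnormSq_nonneg (P x)
        have n3 := fnormSq_nonneg (CurlM P x)
        nlinarith [sq_nonneg R]
  have hsplit : (∫ x : R3, (2 * fnormSq (symMat (P x)) + (1/2) * fnormSq (P x)
        + 648*R^2 * fnormSq (CurlM P x)))
      = 2 * (∫ x : R3, fnormSq (symMat (P x))) + (1/2) * (∫ x : R3, fnormSq (P x))
        + 648*R^2 * ∫ x : R3, fnormSq (CurlM P x) := by
    have i1 : Integrable (fun x : R3 => 2 * fnormSq (symMat (P x))) := iSym.const_mul 2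
    have i2 : Integrable (fun x : R3 => (1/2) * fnormSq (P x)) := iP.const_mul (1/2)
    have i12 : Integrable (fun x : R3 => 2 * fnormSq (symMat (P x)) + (1/2) * fnormSq (P x)) :=
      i1.add i2
    have i3 : Integrable (fun x : R3 => 648*R^2 * fnormSq (CurlM P x)) := iCurl.const_mul _
    rw [integral_add i12 i3, integral_add i1 i2,
      integral_const_mul, integral_const_mul, integral_const_mul]
  have hdecomp : (∫ x : R3, fnormSq (P x))
      = (∫ x : R3, fnormSq (symMat (P x))) + ∫ x : R3, fnormSq (skeww (P x)) := by
    rw [← integral_add iSym iSkew]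
    exact integral_congr_ae (Filter.Eventually.of_forall (fun x => fnormSq_decomp (P x)))
  have hRc := sq_nonneg R
  linarith [hskewW, hW_le, hsplit, hdecomp]

end K2sec


lemma symMat_symm (M : M3) : ∀ i j, symMat M i j = symMat M j i := by
  intro i j
  simp only [symMat]
  rw [add_comm]

lemma sym_tri (M N : M3) :
    fnormSq (symMat M) ≤ 2 * fnormSq (symMat (M - N)) + 2 * fnormSq (symMat N) := by
  simp only [fnormSq, finner, symMat, Pi.sub_apply, Fin.sum_univ_three]
  nlinarith [sq_nonneg ((M 0 0 + M 0 0)/2 - (N 0 0 + N 0 0)),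
    sq_nonneg ((M 0 1 + M 1 0)/2 - (N 0 1 + N 1 0)),
    sq_nonneg ((M 0 2 + M 2 0)/2 - (N 0 2 + N 2 0)),
    sq_nonneg ((M 1 1 + M 1 1)/2 - (N 1 1 + N 1 1)),
    sq_nonneg ((M 1 2 + M 2 1)/2 - (N 1 2 + N 2 1)),
    sq_nonneg ((M 2 2 + M 2 2)/2 - (N 2 2 + N 2 2))]

lemma finner_zero : finner (0 : M3) (0 : M3) = 0 := by
  simp [finner]

lemma symMat_zero : symMat (0 : M3) = 0 := by
  funext i j
  simp [symMat]

end aux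

/-- coercivity of the bilinear form of the relaxed micromorphic model. -/
theorem stmt_7 (Ω : Set R3) (hΩo : IsOpen Ω) (hΩb : Bornology.IsBounded Ω)
    (CC HH LL : M3 →ₗ[ℝ] M3)
    (hCmap : ∀ X : M3, isSymmM X → isSymmM (CC X))
    (hHmap : ∀ X : M3, isSymmM X → isSymmM (HH X))
    (hCsa : ∀ X Y : M3, finner (CC X) Y = finner X (CC Y))
    (hHsa : ∀ X Y : M3, finner (HH X) Y = finner X (HH Y))
    (hLsa : ∀ X Y : M3, finner (LL X) Y = finner X (LL Y))
    (cm cM hm hM Lm LM : ℝ)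
    (hcm : 0 < cm) (hcM : 0 < cM) (hhm : 0 < hm) (hhM : 0 < hM) (hLm : 0 < Lm) (hLM : 0 < LM)
    (hC : ∀ X : M3, isSymmM X →
      cm * fnormSq X ≤ finner (CC X) X ∧ finner (CC X) X ≤ cM * fnormSq X)
    (hH : ∀ X : M3, isSymmM X →
      hm * fnormSq X ≤ finner (HH X) X ∧ finner (HH X) X ≤ hM * fnormSq X)
    (hL : ∀ X : M3, Lm * fnormSq X ≤ finner (LL X) X ∧ finner (LL X) X ≤ LM * fnormSq X) :
    ∃ C : ℝ, 0 < C ∧ ∀ (u : R3 → R3) (P : R3 → M3),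
      ContDiff ℝ 1 u → HasCompactSupport u → tsupport u ⊆ Ω →
      ContDiff ℝ 1 P → HasCompactSupport P → tsupport P ⊆ Ω →
      C * ((∫ x in Ω, fnormSq (jac u x)) + (∫ x in Ω, fnormSq (P x)) +
            ∫ x in Ω, fnormSq (CurlM P x)) ≤
        ∫ x in Ω, (finner (CC (symMat (jac u x - P x))) (symMat (jac u x - P x))
          + finner (HH (symMat (P x))) (symMat (P x))
          + finner (LL (CurlM P x)) (CurlM P x)) := by
  classical
  obtain ⟨r0, hr0⟩ := hΩb.subset_closedBall 0
  set R : ℝ := max r0 0 with hRdef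
  have hR0 : (0:ℝ) ≤ R := le_max_right _ _
  have hΩR : Ω ⊆ Metric.closedBall 0 R :=
    hr0.trans (Metric.closedBall_subset_closedBall (le_max_left _ _))
  set K : ℝ := 10 + 1296 * R^2 with hKdef
  have hK : (0:ℝ) < K := by positivity
  set m₀ : ℝ := min cm (min hm Lm) with hm₀def
  have hm₀ : (0:ℝ) < m₀ := lt_min hcm (lt_min hhm hLm)
  refine ⟨m₀ / K, div_pos hm₀ hK, ?_⟩
  intro u P hu hcu hsuppu hP hcP hsuppP
  -- entry facts
  have huent : ∀ i, ContDiff ℝ 1 (fun y => u y i) := fun i => contDiff_pi.1 hu i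
  have hujc : ∀ i j, Continuous fun x => jac u x i j :=
    fun i j => aux.pd_continuous (huent i) j
  have hPent : ∀ c d, ContDiff ℝ 1 (fun y => P y c d) := fun c d => aux.entry_contDiff hP c d
  have hPc : ∀ c d, Continuous fun x => P x c d := fun c d => (hPent c d).continuous
  have hpdP : ∀ b c d, Continuous fun x => pd b (fun y => P y c d) x :=
    fun b c d => aux.pd_continuous (hPent c d) b
  have hcurlE : ∀ c k : Fin 3, Continuous fun x => CurlM P x c k := by
    intro c k
    match k with
    | 0 =>
      have : (fun x => CurlM P x c 0)
          = fun x => pd 1 (fun y => P y c 2) x - pd 2 (fun y => P y c 1) x := by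
        funext x; simp [CurlM, curlV]
      rw [this]; exact (hpdP 1 c 2).sub (hpdP 2 c 1)
    | 1 =>
      have : (fun x => CurlM P x c 1)
          = fun x => pd 2 (fun y => P y c 0) x - pd 0 (fun y => P y c 2) x := by
        funext x; simp [CurlM, curlV]
      rw [this]; exact (hpdP 2 c 0).sub (hpdP 0 c 2)
    | 2 =>
      have : (fun x => CurlM P x c 2)
          = fun x => pd 0 (fun y => P y c 1) x - pd 1 (fun y => P y c 0) x := by
        funext x; simp [CurlM, curlV]
      rw [this]; exact (hpdP 0 c 1).sub (hpdP 1 c 0)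
  -- vanishing facts
  have hvanu : ∀ x, x ∉ tsupport u → ∀ i j, jac u x i j = 0 := by
    intro x hx i j
    exact aux.pd_eq_zero_of_notMem (fun h => hx (aux.tsupport_entry i h)) j
  have hvanP : ∀ x, x ∉ tsupport P → ∀ c d, P x c d = 0 := by
    intro x hx c d
    have h0 : P x = 0 := image_eq_zero_of_notMem_tsupport hx
    rw [h0]; rfl
  have hvanpdP : ∀ x, x ∉ tsupport P → ∀ b c d, pd b (fun y => P y c d) x = 0 := by
    intro x hx b c d
    exact aux.pd_eq_zero_of_notMem (fun h => hx (aux.tsupport_entry2 c d h)) b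
  have hCurl0 : ∀ x, x ∉ tsupport P → CurlM P x = 0 := by
    intro x hx
    funext c k
    fin_cases k <;>
      simp [CurlM, curlV, hvanpdP x hx]
  have hjac0 : ∀ x, x ∉ tsupport u → jac u x = 0 := by
    intro x hx
    funext i j
    exact hvanu x hx i j
  have hPmat0 : ∀ x, x ∉ tsupport P → P x = 0 :=
    fun x hx => image_eq_zero_of_notMem_tsupport hx
  -- convert set integrals to full-space integrals
  have conv1 : (∫ x in Ω, fnormSq (jac u x)) = ∫ x : R3, fnormSq (jac u x) := by
    apply setIntegral_eq_integral_of_forall_compl_eq_zero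
    intro x hx
    simp [fnormSq, finner, hvanu x (fun h => hx (hsuppu h))]
  have conv2 : (∫ x in Ω, fnormSq (P x)) = ∫ x : R3, fnormSq (P x) := by
    apply setIntegral_eq_integral_of_forall_compl_eq_zero
    intro x hx
    simp [fnormSq, finner, hvanP x (fun h => hx (hsuppP h))]
  have conv3 : (∫ x in Ω, fnormSq (CurlM P x)) = ∫ x : R3, fnormSq (CurlM P x) := by
    apply setIntegral_eq_integral_of_forall_compl_eq_zero
    intro x hx
    rw [hCurl0 x (fun h => hx (hsuppP h))]
    simp [fnormSq, finner]
  have conv4 : (∫ x in Ω, (finner (CC (symMat (jac u x - P x))) (symMat (jac u x - P x))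
          + finner (HH (symMat (P x))) (symMat (P x))
          + finner (LL (CurlM P x)) (CurlM P x)))
      = ∫ x : R3, (finner (CC (symMat (jac u x - P x))) (symMat (jac u x - P x))
          + finner (HH (symMat (P x))) (symMat (P x))
          + finner (LL (CurlM P x)) (CurlM P x)) := by
    apply setIntegral_eq_integral_of_forall_compl_eq_zero
    intro x hx
    rw [hjac0 x (fun h => hx (hsuppu h)), hPmat0 x (fun h => hx (hsuppP h)),
      hCurl0 x (fun h => hx (hsuppP h)), sub_zero, aux.symMat_zero, map_zero,
      map_zero, map_zero, aux.finner_zero]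
    simp
  rw [conv1, conv2, conv3, conv4]
  -- integrability setup
  have hKcpt : IsCompact (tsupport u ∪ tsupport P) := hcu.union hcP
  have mkInt : ∀ (f : R3 → ℝ), Continuous f →
      (∀ x, x ∉ tsupport u ∪ tsupport P → f x = 0) → Integrable f := by
    intro f hf h0
    exact hf.integrable_of_hasCompactSupport (HasCompactSupport.intro hKcpt h0)
  have hcontJ : Continuous fun x => fnormSq (jac u x) := by
    have : (fun x => fnormSq (jac u x))
        = fun x => ∑ i : Fin 3, ∑ j : Fin 3, jac u x i j * jac u x i j := rfl
    rw [this]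
    exact continuous_finset_sum _ fun i _ => continuous_finset_sum _ fun j _ =>
      (hujc i j).mul (hujc i j)
  have hcontP : Continuous fun x => fnormSq (P x) := by
    have : (fun x => fnormSq (P x))
        = fun x => ∑ i : Fin 3, ∑ j : Fin 3, P x i j * P x i j := rfl
    rw [this]
    exact continuous_finset_sum _ fun i _ => continuous_finset_sum _ fun j _ =>
      (hPc i j).mul (hPc i j)
  have hcontC : Continuous fun x => fnormSq (CurlM P x) := by
    have : (fun x => fnormSq (CurlM P x))
        = fun x => ∑ i : Fin 3, ∑ j : Fin 3, CurlM P x i j * CurlM P x i j := rfl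
    rw [this]
    exact continuous_finset_sum _ fun i _ => continuous_finset_sum _ fun j _ =>
      (hcurlE i j).mul (hcurlE i j)
  have hcontSymE : Continuous fun x => fnormSq (symMat (jac u x - P x)) := by
    have : (fun x => fnormSq (symMat (jac u x - P x)))
        = fun x => ∑ i : Fin 3, ∑ j : Fin 3,
            (((jac u x i j - P x i j) + (jac u x j i - P x j i))/2)
              * (((jac u x i j - P x i j) + (jac u x j i - P x j i))/2) := rfl
    rw [this]
    refine continuous_finset_sum _ fun i _ => continuous_finset_sum _ fun j _ => ?_
    have hb : Continuous fun x =>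
        (((jac u x i j - P x i j) + (jac u x j i - P x j i))/2) :=
      ((((hujc i j).sub (hPc i j)).add ((hujc j i).sub (hPc j i))).div_const 2)
    exact hb.mul hb
  have hcontSymP : Continuous fun x => fnormSq (symMat (P x)) := by
    have : (fun x => fnormSq (symMat (P x)))
        = fun x => ∑ i : Fin 3, ∑ j : Fin 3,
            ((P x i j + P x j i)/2) * ((P x i j + P x j i)/2) := rfl
    rw [this]
    exact continuous_finset_sum _ fun i _ => continuous_finset_sum _ fun j _ =>
      (((hPc i j).add (hPc j i)).div_const 2).mul (((hPc i j).add (hPc j i)).div_const 2)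
  have hcontSymJ : Continuous fun x => fnormSq (symMat (jac u x)) := by
    have : (fun x => fnormSq (symMat (jac u x)))
        = fun x => ∑ i : Fin 3, ∑ j : Fin 3,
            ((jac u x i j + jac u x j i)/2) * ((jac u x i j + jac u x j i)/2) := rfl
    rw [this]
    exact continuous_finset_sum _ fun i _ => continuous_finset_sum _ fun j _ =>
      (((hujc i j).add (hujc j i)).div_const 2).mul (((hujc i j).add (hujc j i)).div_const 2)
  have iJ : Integrable (fun x => fnormSq (jac u x)) :=
    mkInt _ hcontJ (fun x hx => by
      simp [fnormSq, finner, hvanu x (fun h => hx (Or.inl h))])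
  have iP : Integrable (fun x => fnormSq (P x)) :=
    mkInt _ hcontP (fun x hx => by
      simp [fnormSq, finner, hvanP x (fun h => hx (Or.inr h))])
  have iC : Integrable (fun x => fnormSq (CurlM P x)) :=
    mkInt _ hcontC (fun x hx => by
      rw [hCurl0 x (fun h => hx (Or.inr h))]; simp [fnormSq, finner])
  have iSymE : Integrable (fun x => fnormSq (symMat (jac u x - P x))) :=
    mkInt _ hcontSymE (fun x hx => by
      rw [hjac0 x (fun h => hx (Or.inl h)), hPmat0 x (fun h => hx (Or.inr h)), sub_zero,
        aux.symMat_zero]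
      simp [fnormSq, finner])
  have iSymP : Integrable (fun x => fnormSq (symMat (P x))) :=
    mkInt _ hcontSymP (fun x hx => by
      rw [hPmat0 x (fun h => hx (Or.inr h)), aux.symMat_zero]; simp [fnormSq, finner])
  have iSymJ : Integrable (fun x => fnormSq (symMat (jac u x))) :=
    mkInt _ hcontSymJ (fun x hx => by
      rw [hjac0 x (fun h => hx (Or.inl h)), aux.symMat_zero]; simp [fnormSq, finner])
  -- abbreviations
  set a : ℝ := ∫ x : R3, fnormSq (symMat (jac u x - P x)) with hadef
  set b : ℝ := ∫ x : R3, fnormSq (symMat (P x)) with hbdef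
  set c : ℝ := ∫ x : R3, fnormSq (CurlM P x) with hcdef
  have ha0 : 0 ≤ a := integral_nonneg (fun x => aux.fnormSq_nonneg _)
  have hb0 : 0 ≤ b := integral_nonneg (fun x => aux.fnormSq_nonneg _)
  have hc0 : 0 ≤ c := integral_nonneg (fun x => aux.fnormSq_nonneg _)
  -- Korn: ∫‖∇u‖² ≤ 4a + 4b
  have hkorn : (∫ x : R3, fnormSq (jac u x)) ≤ 4*a + 4*b := by
    have h1 := aux.korn hu hcu
    have h2 : (∫ x : R3, fnormSq (symMat (jac u x)))
        ≤ ∫ x : R3, (2 * fnormSq (symMat (jac u x - P x)) + 2 * fnormSq (symMat (P x))) := by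
      apply integral_mono iSymJ ((iSymE.const_mul 2).add (iSymP.const_mul 2))
      intro x
      exact aux.sym_tri (jac u x) (P x)
    have i1 : Integrable (fun x : R3 => 2 * fnormSq (symMat (jac u x - P x))) :=
      iSymE.const_mul 2
    have i2 : Integrable (fun x : R3 => 2 * fnormSq (symMat (P x))) := iSymP.const_mul 2
    rw [integral_add i1 i2, integral_const_mul, integral_const_mul] at h2
    linarith
  -- incompatible Korn for P
  have hk2 : (∫ x : R3, fnormSq (P x)) ≤ 6*b + 1296*R^2*c := by
    have := aux.k2 hP hcP hR0 (hsuppP.trans hΩR)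
    linarith
  -- lower bound on the RHS
  have hlow : m₀*a + m₀*b + m₀*c
      ≤ ∫ x : R3, (finner (CC (symMat (jac u x - P x))) (symMat (jac u x - P x))
          + finner (HH (symMat (P x))) (symMat (P x))
          + finner (LL (CurlM P x)) (CurlM P x)) := by
    have hptw : ∀ x : R3, cm * fnormSq (symMat (jac u x - P x))
        + hm * fnormSq (symMat (P x)) + Lm * fnormSq (CurlM P x)
        ≤ finner (CC (symMat (jac u x - P x))) (symMat (jac u x - P x))
          + finner (HH (symMat (P x))) (symMat (P x))
          + finner (LL (CurlM P x)) (CurlM P x) := by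
      intro x
      have h1 := (hC (symMat (jac u x - P x)) (aux.symMat_symm _)).1
      have h2 := (hH (symMat (P x)) (aux.symMat_symm _)).1
      have h3 := (hL (CurlM P x)).1
      linarith
    -- continuity of the RHS integrand
    have hCCc : Continuous (⇑CC) := CC.continuous_of_finiteDimensional
    have hHHc : Continuous (⇑HH) := HH.continuous_of_finiteDimensional
    have hLLc : Continuous (⇑LL) := LL.continuous_of_finiteDimensional
    have hm1 : Continuous fun x => symMat (jac u x - P x) := by
      apply continuous_pi; intro i; apply continuous_pi; intro j
      exact (((hujc i j).sub (hPc i j)).add ((hujc j i).sub (hPc j i))).div_const 2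
    have hm2 : Continuous fun x => symMat (P x) := by
      apply continuous_pi; intro i; apply continuous_pi; intro j
      exact ((hPc i j).add (hPc j i)).div_const 2
    have hm3 : Continuous fun x => CurlM P x := by
      apply continuous_pi; intro i; apply continuous_pi; intro j
      exact hcurlE i j
    have hfinner_cont : ∀ (L : M3 →ₗ[ℝ] M3) (m : R3 → M3), Continuous (⇑L) → Continuous m →
        Continuous fun x => finner (L (m x)) (m x) := by
      intro L m hLc hmc
      have : (fun x => finner (L (m x)) (m x))
          = fun x => ∑ i : Fin 3, ∑ j : Fin 3, (L (m x)) i j * (m x) i j := rfl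
      rw [this]
      refine continuous_finset_sum _ fun i _ => continuous_finset_sum _ fun j _ => ?_
      have hLij : Continuous fun x => (L (m x)) i j :=
        (continuous_apply j).comp ((continuous_apply i).comp (hLc.comp hmc))
      have hmij : Continuous fun x => (m x) i j :=
        (continuous_apply j).comp ((continuous_apply i).comp hmc)
      exact hLij.mul hmij
    have hRHScont : Continuous fun x =>
        (finner (CC (symMat (jac u x - P x))) (symMat (jac u x - P x))
          + finner (HH (symMat (P x))) (symMat (P x))
          + finner (LL (CurlM P x)) (CurlM P x)) :=
      ((hfinner_cont CC _ hCCc hm1).add (hfinner_cont HH _ hHHc hm2)).add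
        (hfinner_cont LL _ hLLc hm3)
    have iRHS : Integrable (fun x =>
        (finner (CC (symMat (jac u x - P x))) (symMat (jac u x - P x))
          + finner (HH (symMat (P x))) (symMat (P x))
          + finner (LL (CurlM P x)) (CurlM P x))) := by
      apply mkInt _ hRHScont
      intro x hx
      rw [hjac0 x (fun h => hx (Or.inl h)), hPmat0 x (fun h => hx (Or.inr h)),
        hCurl0 x (fun h => hx (Or.inr h)), sub_zero, aux.symMat_zero, map_zero,
        map_zero, map_zero, aux.finner_zero]
      simp
    have i1 : Integrable (fun x : R3 => cm * fnormSq (symMat (jac u x - P x))) :=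
      iSymE.const_mul cm
    have i2 : Integrable (fun x : R3 => hm * fnormSq (symMat (P x))) := iSymP.const_mul hm
    have i3 : Integrable (fun x : R3 => Lm * fnormSq (CurlM P x)) := iC.const_mul Lm
    have i12 : Integrable (fun x : R3 => cm * fnormSq (symMat (jac u x - P x))
        + hm * fnormSq (symMat (P x))) := i1.add i2
    have i123 : Integrable (fun x : R3 => cm * fnormSq (symMat (jac u x - P x))
        + hm * fnormSq (symMat (P x)) + Lm * fnormSq (CurlM P x)) := i12.add i3
    have hmono := integral_mono i123 iRHS hptw
    rw [integral_add i12 i3, integral_add i1 i2, integral_const_mul, integral_const_mul,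
      integral_const_mul] at hmono
    have hma : m₀ * a ≤ cm * a :=
      mul_le_mul_of_nonneg_right (min_le_left _ _) ha0
    have hmb : m₀ * b ≤ hm * b :=
      mul_le_mul_of_nonneg_right ((min_le_right cm _).trans (min_le_left hm Lm)) hb0
    have hmc : m₀ * c ≤ Lm * c :=
      mul_le_mul_of_nonneg_right ((min_le_right cm _).trans (min_le_right hm Lm)) hc0
    linarith
  -- combine
  have hsum : (∫ x : R3, fnormSq (jac u x)) + (∫ x : R3, fnormSq (P x))
      + (∫ x : R3, fnormSq (CurlM P x)) ≤ K * (a + b + c) := by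
    have hR2 : (0:ℝ) ≤ 1296 * R^2 := by positivity
    have e1 : (1296 * R^2) * a ≥ 0 := mul_nonneg hR2 ha0
    have e2 : (1296 * R^2) * b ≥ 0 := mul_nonneg hR2 hb0
    have e3 : (1296 * R^2) * c ≥ 0 := mul_nonneg hR2 hc0
    have hKexp : K * (a + b + c)
        = 10*a + 10*b + 10*c + (1296*R^2)*a + (1296*R^2)*b + (1296*R^2)*c := by
      rw [hKdef]; ring
    rw [hKexp]
    linarith
  have hfinal : (m₀ / K) * ((∫ x : R3, fnormSq (jac u x)) + (∫ x : R3, fnormSq (P x))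
      + (∫ x : R3, fnormSq (CurlM P x))) ≤ m₀ * (a + b + c) := by
    have h1 : (m₀ / K) * ((∫ x : R3, fnormSq (jac u x)) + (∫ x : R3, fnormSq (P x))
        + (∫ x : R3, fnormSq (CurlM P x))) ≤ (m₀ / K) * (K * (a + b + c)) :=
      mul_le_mul_of_nonneg_left hsum (le_of_lt (div_pos hm₀ hK))
    have h2 : (m₀ / K) * (K * (a + b + c)) = m₀ * (a + b + c) := by
      field_simp
    linarith
  have : m₀ * (a + b + c) ≤ m₀*a + m₀*b + m₀*c := by ring_nf; linarith
  linarith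
end
end

section
/- Let α₁, α₂, α₃ ∈ ℝ. The following are equivalent: (a) α₁ = −α₂; (b) for every twice continuously differentiable matrix field P : ℝ³ → ℝ^{3×3} taking values in the symmetric matrices, the matrix Curl( α₁ · dev sym Curl P + α₂ · skew Curl P + α₃ · tr(Curl P) · 𝟙 )(x) is symmetric at every point x ∈ ℝ³. -/
open MeasureTheory

noncomputable section

/- ===== auxiliary lemmas ===== -/

lemma CurlM_a0 (Q : R3 → M3) (x : R3) (i : Fin 3) :
    CurlM Q x i 0 = pd 1 (fun y => Q y i 2) x - pd 2 (fun y => Q y i 1) x := rfl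
lemma CurlM_a1 (Q : R3 → M3) (x : R3) (i : Fin 3) :
    CurlM Q x i 1 = pd 2 (fun y => Q y i 0) x - pd 0 (fun y => Q y i 2) x := rfl
lemma CurlM_a2 (Q : R3 → M3) (x : R3) (i : Fin 3) :
    CurlM Q x i 2 = pd 0 (fun y => Q y i 1) x - pd 1 (fun y => Q y i 0) x := rfl

lemma entry_cd (P : R3 → M3) (hP : ContDiff ℝ 2 P) (i j : Fin 3) :
    ContDiff ℝ 2 (fun y => P y i j) := contDiff_pi.mp (contDiff_pi.mp hP i) j

lemma pd_diff (f : R3 → ℝ) (hf : ContDiff ℝ 2 f) (j : Fin 3) :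
    Differentiable ℝ (fun y => pd j f y) := by
  have h1 : ContDiff ℝ 1 (fderiv ℝ f) := hf.fderiv_right le_rfl
  exact (h1.clm_apply contDiff_const).differentiable (by norm_num)

lemma pd_comb (c : ℝ) (f g : R3 → ℝ) (hf : ContDiff ℝ 2 f) (hg : ContDiff ℝ 2 g)
    (k a b : Fin 3) (x : R3) :
    pd k (fun y => c * (pd a f y - pd b g y)) x
      = c * (pd k (fun y => pd a f y) x - pd k (fun y => pd b g y) x) := by
  have hfa : DifferentiableAt ℝ (fun y => pd a f y) x := pd_diff f hf a x
  have hgb : DifferentiableAt ℝ (fun y => pd b g y) x := pd_diff g hg b x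
  simp only [pd] at hfa hgb ⊢
  rw [fderiv_const_mul (by exact hfa.sub hgb : DifferentiableAt ℝ (fun y => (fderiv ℝ f y) (Pi.single a 1) - (fderiv ℝ g y) (Pi.single b 1)) x), fderiv_fun_sub hfa hgb]
  simp

lemma pd_comm (f : R3 → ℝ) (hf : ContDiff ℝ 2 f) (i j : Fin 3) (x : R3) :
    pd i (fun y => pd j f y) x = pd j (fun y => pd i f y) x := by
  have hd : Differentiable ℝ f := hf.differentiable (by norm_num)
  have h1 : ContDiff ℝ 1 (fderiv ℝ f) := hf.fderiv_right le_rfl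
  have hdd : DifferentiableAt ℝ (fderiv ℝ f) x := (h1.differentiable (by norm_num)) x
  have key := second_derivative_symmetric (f := f) (f' := fderiv ℝ f)
    (fun y => (hd y).hasFDerivAt) hdd.hasFDerivAt (Pi.single i 1) (Pi.single j 1)
  have e : ∀ v w : R3, fderiv ℝ (fun y => fderiv ℝ f y v) x w
      = fderiv ℝ (fderiv ℝ f) x w v := by
    intro v w
    rw [fderiv_clm_apply hdd (differentiableAt_const v)]
    simp
  simp only [pd]
  rw [e, e, key]

lemma inc_symm (c : ℝ) (P : R3 → M3) (hP : ContDiff ℝ 2 P)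
    (hs : ∀ x, isSymmM (P x)) (x : R3) :
    isSymmM (CurlM (fun y k l => c * CurlM P y l k) x) := by
  have e10 : (fun z : R3 => P z 1 0) = (fun z => P z 0 1) := funext fun z => hs z 1 0
  have e20 : (fun z : R3 => P z 2 0) = (fun z => P z 0 2) := funext fun z => hs z 2 0
  have e21 : (fun z : R3 => P z 2 1) = (fun z => P z 1 2) := funext fun z => hs z 2 1
  have hcomb : ∀ (k a b u v u' v' : Fin 3) (x : R3),
      pd k (fun y => c * (pd a (fun z => P z u v) y - pd b (fun z => P z u' v') y)) x
        = c * (pd k (fun y => pd a (fun z => P z u v) y) x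
            - pd k (fun y => pd b (fun z => P z u' v') y) x) :=
    fun k a b u v u' v' x =>
      pd_comb c _ _ (entry_cd P hP u v) (entry_cd P hP u' v') k a b x
  have c10 : ∀ (u v : Fin 3) (x : R3),
      pd 1 (fun y => pd 0 (fun z => P z u v) y) x
        = pd 0 (fun y => pd 1 (fun z => P z u v) y) x :=
    fun u v x => pd_comm _ (entry_cd P hP u v) 1 0 x
  have c20 : ∀ (u v : Fin 3) (x : R3),
      pd 2 (fun y => pd 0 (fun z => P z u v) y) x
        = pd 0 (fun y => pd 2 (fun z => P z u v) y) x :=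
    fun u v x => pd_comm _ (entry_cd P hP u v) 2 0 x
  have c21 : ∀ (u v : Fin 3) (x : R3),
      pd 2 (fun y => pd 1 (fun z => P z u v) y) x
        = pd 1 (fun y => pd 2 (fun z => P z u v) y) x :=
    fun u v x => pd_comm _ (entry_cd P hP u v) 2 1 x
  set F : R3 → M3 := fun y k l => c * CurlM P y l k with hF
  have h01 : CurlM F x 0 1 = CurlM F x 1 0 := by
    simp only [hF, CurlM_a0, CurlM_a1, CurlM_a2, e10, e20, e21, hcomb, c10, c20, c21]
    ring
  have h02 : CurlM F x 0 2 = CurlM F x 2 0 := by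
    simp only [hF, CurlM_a0, CurlM_a1, CurlM_a2, e10, e20, e21, hcomb, c10, c20, c21]
    ring
  have h12 : CurlM F x 1 2 = CurlM F x 2 1 := by
    simp only [hF, CurlM_a0, CurlM_a1, CurlM_a2, e10, e20, e21, hcomb, c10, c20, c21]
    ring
  intro i j
  fin_cases i <;> fin_cases j
  · rfl
  · exact h01
  · exact h02
  · exact h01.symm
  · rfl
  · exact h12
  · exact h02.symm
  · exact h12.symm
  · rfl

/-- The example field for the reverse direction. -/
def Pex : R3 → M3 := fun y i j => if i = 0 ∧ j = 0 then y 0 * y 1 else 0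

lemma Pex_cd : ContDiff ℝ 2 Pex := by
  apply contDiff_pi.mpr; intro i
  apply contDiff_pi.mpr; intro j
  by_cases h : i = 0 ∧ j = 0
  · simp only [Pex, h, and_self, if_true]
    exact (contDiff_pi.mp contDiff_id 0).mul (contDiff_pi.mp contDiff_id 1)
  · simp only [Pex, h, if_false]
    exact contDiff_const

lemma Pex_symm : ∀ x, isSymmM (Pex x) := by
  intro x i j
  simp only [Pex, and_comm]

lemma pd_const (c : ℝ) (j : Fin 3) (x : R3) : pd j (fun _ : R3 => c) x = 0 := by
  simp [pd]

lemma pd_zeroFun (j : Fin 3) (x : R3) : pd j (fun _ : R3 => (0:ℝ)) x = 0 := pd_const 0 j x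

lemma pd_mul01 (j : Fin 3) (x : R3) :
    pd j (fun y : R3 => y 0 * y 1) x
      = x 0 * (Pi.single j 1 : R3) 1 + x 1 * (Pi.single j 1 : R3) 0 := by
  have h0 : HasFDerivAt (fun y : R3 => y 0) (ContinuousLinearMap.proj 0 : R3 →L[ℝ] ℝ) x :=
    (ContinuousLinearMap.proj (0:Fin 3) : R3 →L[ℝ] ℝ).hasFDerivAt
  have h1 : HasFDerivAt (fun y : R3 => y 1) (ContinuousLinearMap.proj 1 : R3 →L[ℝ] ℝ) x :=
    (ContinuousLinearMap.proj (1:Fin 3) : R3 →L[ℝ] ℝ).hasFDerivAt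
  have h : HasFDerivAt (fun y : R3 => y 0 * y 1) (x 0 • ContinuousLinearMap.proj 1 + x 1 • ContinuousLinearMap.proj 0 : R3 →L[ℝ] ℝ) x := h0.mul h1
  simp only [pd, h.fderiv]
  simp

lemma pd_cmul0 (c : ℝ) (j : Fin 3) (x : R3) :
    pd j (fun y : R3 => c * y 0) x = c * (Pi.single j 1 : R3) 0 := by
  have h0 : HasFDerivAt (fun y : R3 => y 0) (ContinuousLinearMap.proj 0 : R3 →L[ℝ] ℝ) x :=
    (ContinuousLinearMap.proj (0:Fin 3) : R3 →L[ℝ] ℝ).hasFDerivAt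
  have h := h0.const_mul c
  simp only [pd, h.fderiv]
  simp

lemma Pex_entry_zero (i j : Fin 3) (h : ¬(i = 0 ∧ j = 0)) :
    (fun z : R3 => Pex z i j) = fun _ => (0:ℝ) := by
  funext z; simp [Pex, h]

lemma Pex_entry00 : (fun z : R3 => Pex z 0 0) = fun z => z 0 * z 1 := by
  funext z; simp [Pex]

lemma hC00 : ∀ y : R3, CurlM Pex y 0 0 = 0 := by
  intro y
  rw [CurlM_a0, Pex_entry_zero 0 2 (by simp), Pex_entry_zero 0 1 (by simp)]
  simp [pd_zeroFun]

lemma hC01 : ∀ y : R3, CurlM Pex y 0 1 = 0 := by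
  intro y
  rw [CurlM_a1, Pex_entry00, Pex_entry_zero 0 2 (by simp)]
  simp [pd_mul01, pd_zeroFun, Pi.single_apply]

lemma hC02 : ∀ y : R3, CurlM Pex y 0 2 = -(y 0) := by
  intro y
  rw [CurlM_a2, Pex_entry00, Pex_entry_zero 0 1 (by simp)]
  simp [pd_mul01, pd_zeroFun, Pi.single_apply]

lemma hCz : ∀ (y : R3) (k l : Fin 3), k ≠ 0 → CurlM Pex y k l = 0 := by
  intro y k l hk
  have hz : ∀ m : Fin 3, (fun z : R3 => Pex z k m) = fun _ => (0:ℝ) :=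
    fun m => Pex_entry_zero k m (fun h => hk h.1)
  fin_cases l
  · show CurlM Pex y k 0 = 0
    rw [CurlM_a0, hz 2, hz 1]; simp [pd_zeroFun]
  · show CurlM Pex y k 1 = 0
    rw [CurlM_a1, hz 0, hz 2]; simp [pd_zeroFun]
  · show CurlM Pex y k 2 = 0
    rw [CurlM_a2, hz 1, hz 0]; simp [pd_zeroFun]

lemma htrPex : ∀ y : R3, trM (CurlM Pex y) = 0 := by
  intro y
  simp [trM, Fin.sum_univ_three, hC00 y, hCz y 1 1 (by decide), hCz y 2 2 (by decide)]

lemma htrsPex : ∀ y : R3, trM (symMat (CurlM Pex y)) = 0 := by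
  intro y
  have h := htrPex y
  simp only [trM, Fin.sum_univ_three, symMat] at h ⊢
  linarith

/-- for symmetric-valued P, symmetry of Curl of the isotropic moment
stress holds for all such P iff α₁ = −α₂. -/
theorem stmt_9 (α₁ α₂ α₃ : ℝ) :
    α₁ = -α₂ ↔
      (∀ P : R3 → M3, ContDiff ℝ 2 P → (∀ x, isSymmM (P x)) →
        ∀ x : R3, isSymmM (CurlM (fun y => fun i j =>
          α₁ * devv (symMat (CurlM P y)) i j + α₂ * skeww (CurlM P y) i j
            + α₃ * trM (CurlM P y) * idM i j) x)) := by
  constructor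
  · intro h P hP hsymP x
    have h' : α₂ = -α₁ := by linarith
    have e10 : (fun z : R3 => P z 1 0) = (fun z => P z 0 1) := funext fun z => hsymP z 1 0
    have e20 : (fun z : R3 => P z 2 0) = (fun z => P z 0 2) := funext fun z => hsymP z 2 0
    have e21 : (fun z : R3 => P z 2 1) = (fun z => P z 1 2) := funext fun z => hsymP z 2 1
    have htr : ∀ y, trM (CurlM P y) = 0 := by
      intro y
      simp only [trM, Fin.sum_univ_three, CurlM_a0, CurlM_a1, CurlM_a2, e10, e20, e21]
      ring
    have hQ : (fun y => fun i j =>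
          α₁ * devv (symMat (CurlM P y)) i j + α₂ * skeww (CurlM P y) i j
            + α₃ * trM (CurlM P y) * idM i j)
        = fun y k l => α₁ * CurlM P y l k := by
      funext y k l
      have h2 : trM (symMat (CurlM P y)) = 0 := by
        have h3 := htr y
        simp only [trM, symMat, Fin.sum_univ_three] at h3 ⊢
        linarith
      simp only [devv, symMat, skeww, h2, htr y, h']
      ring
    rw [hQ]
    exact inc_symm α₁ P hP hsymP x
  · intro h
    set x : R3 := fun _ => 0 with hx
    have key := h Pex Pex_cd Pex_symm x 0 1
    have f00 : (fun y : R3 => α₁ * devv (symMat (CurlM Pex y)) 0 0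
        + α₂ * skeww (CurlM Pex y) 0 0 + α₃ * trM (CurlM Pex y) * idM 0 0)
        = fun _ => (0:ℝ) := by
      funext y
      simp only [devv, symMat, skeww, htrsPex y, htrPex y, hC00 y]
      ring
    have f02 : (fun y : R3 => α₁ * devv (symMat (CurlM Pex y)) 0 2
        + α₂ * skeww (CurlM Pex y) 0 2 + α₃ * trM (CurlM Pex y) * idM 0 2)
        = fun y => (-(α₁ + α₂) / 2) * y 0 := by
      funext y
      simp only [devv, symMat, skeww, htrsPex y, htrPex y, hC02 y,
        hCz y 2 0 (by decide)]
      ring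
    have f12 : (fun y : R3 => α₁ * devv (symMat (CurlM Pex y)) 1 2
        + α₂ * skeww (CurlM Pex y) 1 2 + α₃ * trM (CurlM Pex y) * idM 1 2)
        = fun _ => (0:ℝ) := by
      funext y
      simp only [devv, symMat, skeww, htrsPex y, htrPex y,
        hCz y 1 2 (by decide), hCz y 2 1 (by decide)]
      ring
    have f11 : (fun y : R3 => α₁ * devv (symMat (CurlM Pex y)) 1 1
        + α₂ * skeww (CurlM Pex y) 1 1 + α₃ * trM (CurlM Pex y) * idM 1 1)
        = fun _ => (0:ℝ) := by
      funext y
      simp only [devv, symMat, skeww, htrsPex y, htrPex y, hCz y 1 1 (by decide)]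
      ring
    simp only [CurlM_a0, CurlM_a1] at key
    rw [f00, f02, f12, f11] at key
    simp only [pd_zeroFun, pd_cmul0] at key
    have hs0 : (Pi.single (0:Fin 3) 1 : R3) 0 = 1 := by simp
    rw [hs0] at key
    linarith
end
end

section
/- Let Ω ⊂ ℝ³ be a bounded open set, and let ℂ, ℍ be linear maps from ℝ^{3×3} to ℝ^{3×3} mapping symmetric matrices to symmetric matrices, self-adjoint with respect to the Frobenius inner product, and satisfying c_m‖X‖² ≤ ⟨ℂ.X, X⟩ ≤ c_M‖X‖² and h_m‖X‖² ≤ ⟨ℍ.X, X⟩ ≤ h_M‖X‖² for all symmetric X with constants c_m, c_M, h_m, h_M > 0. Then there exists a constant a₂ > 0 such that for every continuously differentiable vector field u : ℝ³ → ℝ³ with compact support contained in Ω and every continuous matrix field P : Ω → ℝ^{3×3} with ∫_Ω ‖P‖² dx < ∞: a₂ · ( ∫_Ω ‖∇u‖² dx + ∫_Ω ‖dev sym P‖² dx ) ≤ ∫_Ω ( ⟨ℂ.sym(∇u − P), sym(∇u − P)⟩ + ⟨ℍ.dev sym P, dev sym P⟩ ) dx. -/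
open MeasureTheory

noncomputable section

open Filter Topology

lemma isSymm_symMat (X : M3) : isSymmM (symMat X) := by
  intro i j; simp [symMat]; ring
lemma isSymm_devv {X : M3} (h : isSymmM X) : isSymmM (devv X) := by
  intro i j; simp [devv, idM, h i j, eq_comm]
lemma fnormSq_nonneg (X : M3) : 0 ≤ fnormSq X := by
  unfold fnormSq finner
  apply Finset.sum_nonneg; intro i _; apply Finset.sum_nonneg; intro j _; exact mul_self_nonneg _
lemma fnormSq_devv (X : M3) : fnormSq (devv X) = fnormSq X - (trM X)^2 / 3 := by
  simp [fnormSq, finner, devv, trM, idM, Fin.sum_univ_three]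
  ring
lemma fnormSq_devv_le (X : M3) : fnormSq (devv X) ≤ fnormSq X := by
  rw [fnormSq_devv]; nlinarith [sq_nonneg (trM X)]
lemma fnormSq_symMat_le (X : M3) : fnormSq (symMat X) ≤ fnormSq X := by
  simp only [fnormSq, finner, symMat, Fin.sum_univ_three]
  nlinarith [sq_nonneg (X 0 1 - X 1 0), sq_nonneg (X 0 2 - X 2 0), sq_nonneg (X 1 2 - X 2 1)]
lemma fnormSq_add_le (X Y : M3) :
    fnormSq (fun i j => X i j + Y i j) ≤ 2 * fnormSq X + 2 * fnormSq Y := by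
  simp only [fnormSq, finner, Fin.sum_univ_three]
  nlinarith [sq_nonneg (X 0 0 - Y 0 0), sq_nonneg (X 0 1 - Y 0 1), sq_nonneg (X 0 2 - Y 0 2),
    sq_nonneg (X 1 0 - Y 1 0), sq_nonneg (X 1 1 - Y 1 1), sq_nonneg (X 1 2 - Y 1 2),
    sq_nonneg (X 2 0 - Y 2 0), sq_nonneg (X 2 1 - Y 2 1), sq_nonneg (X 2 2 - Y 2 2)]
lemma devv_symMat_add (A B : M3) (i j : Fin 3) :
    devv (symMat (fun i j => A i j + B i j)) i j = devv (symMat A) i j + devv (symMat B) i j := by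
  simp [devv, symMat, trM, idM, Fin.sum_univ_three]
  split <;> ring
lemma korn_ptwise (A : M3) :
    fnormSq (devv (symMat A)) = fnormSq A / 2
      + (∑ i, ∑ j, A i j * A j i) / 2 - (trM A)^2 / 3 := by
  simp [fnormSq, finner, devv, symMat, trM, idM, Fin.sum_univ_three]
  ring


lemma pd_continuous {f : R3 → ℝ} (hf : ContDiff ℝ 1 f) (j : Fin 3) :
    Continuous (pd j f) :=
  (ContinuousLinearMap.apply ℝ ℝ (Pi.single j 1)).continuous.comp (hf.continuous_fderiv one_ne_zero)

lemma pd_support_subset {f : R3 → ℝ} (j : Fin 3) :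
    Function.support (pd j f) ⊆ tsupport f := by
  intro x hx
  have : fderiv ℝ f x ≠ 0 := fun h => hx (by simp [pd, h])
  exact support_fderiv_subset ℝ (by simpa [Function.mem_support] using this)

lemma pd_hascompact {f : R3 → ℝ} (hcf : HasCompactSupport f) (j : Fin 3) :
    HasCompactSupport (pd j f) :=
  HasCompactSupport.intro hcf.isCompact fun x hx => by
    have : x ∉ Function.support (pd j f) := fun h => hx (pd_support_subset j h)
    simpa [Function.mem_support, not_not] using this

lemma ibp_smooth (f g : R3 → ℝ) (hf : ContDiff ℝ 1 f) (hcf : HasCompactSupport f)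
    (hg : ContDiff ℝ (⊤ : ℕ∞) g) (hcg : HasCompactSupport g) (i j : Fin 3) :
    ∫ x, pd i f x * pd j g x = ∫ x, pd j f x * pd i g x := by
  have hfd : Differentiable ℝ f := hf.differentiable one_ne_zero
  have hgd : Differentiable ℝ g := hg.differentiable (by norm_num)
  have hg1 : ContDiff ℝ (⊤ : ℕ∞) (fderiv ℝ g) := hg.fderiv_right (by norm_num)
  have hcont_pdf : ∀ k, Continuous (pd k f) := pd_continuous hf
  have hcont_pdg : ∀ k : Fin 3, Continuous (pd k g) := pd_continuous (hg.of_le (by norm_num))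
  have hhd : ∀ k : Fin 3, Differentiable ℝ (pd k g) := fun k x =>
    (hg1.differentiable (by norm_num) x).clm_apply (differentiableAt_const _)
  have hfd2 : ∀ (k : Fin 3) (x : R3) (v : R3),
      fderiv ℝ (pd k g) x v = fderiv ℝ (fderiv ℝ g) x v (Pi.single k 1) := by
    intro k x v
    unfold pd
    rw [fderiv_clm_apply (hg1.differentiable (by norm_num) x) (differentiableAt_const _)]
    simp
  have hsymm : ∀ (x : R3) (v w : R3),
      fderiv ℝ (fderiv ℝ g) x v w = fderiv ℝ (fderiv ℝ g) x w v := fun x v w =>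
    second_derivative_symmetric (fun y => (hgd y).hasFDerivAt)
      ((hg1.differentiable (by norm_num) x).hasFDerivAt) v w
  have hc2 : ∀ k l : Fin 3,
      Continuous (fun x => fderiv ℝ (fderiv ℝ g) x (Pi.single k 1) (Pi.single l 1)) := by
    intro k l
    exact (ContinuousLinearMap.apply ℝ ℝ (Pi.single l 1)).continuous.comp
      ((ContinuousLinearMap.apply ℝ (R3 →L[ℝ] ℝ) (Pi.single k 1)).continuous.comp
        ((hg1.of_le (by norm_num) : ContDiff ℝ 1 (fderiv ℝ g)).continuous_fderiv one_ne_zero))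
  have key : ∀ k l : Fin 3, ∫ x, pd k f x * pd l g x
      = - ∫ x, fderiv ℝ (fderiv ℝ g) x (Pi.single k 1) (Pi.single l 1) * f x := by
    intro k l
    have h1 : Integrable (fun x => fderiv ℝ (pd l g) x (Pi.single k 1) * f x) := by
      have : (fun x => fderiv ℝ (pd l g) x (Pi.single k 1) * f x)
          = fun x => fderiv ℝ (fderiv ℝ g) x (Pi.single k 1) (Pi.single l 1) * f x := by
        funext x; rw [hfd2]
      rw [this]
      exact ((hc2 k l).mul hf.continuous).integrable_of_hasCompactSupport hcf.mul_left
    have h2 : Integrable (fun x => pd l g x * fderiv ℝ f x (Pi.single k 1)) :=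
      ((hcont_pdg l).mul (hcont_pdf k)).integrable_of_hasCompactSupport
        (pd_hascompact hcf k).mul_left
    have h3 : Integrable (fun x => pd l g x * f x) :=
      ((hcont_pdg l).mul hf.continuous).integrable_of_hasCompactSupport hcf.mul_left
    have := integral_mul_fderiv_eq_neg_fderiv_mul_of_integrable h1 h2 h3 (fun x _ => hhd l x) (fun x _ => hfd x)
    calc ∫ x, pd k f x * pd l g x = ∫ x, pd l g x * fderiv ℝ f x (Pi.single k 1) := by
          apply integral_congr_ae; filter_upwards with x; exact mul_comm _ _
      _ = - ∫ x, fderiv ℝ (pd l g) x (Pi.single k 1) * f x := this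
      _ = - ∫ x, fderiv ℝ (fderiv ℝ g) x (Pi.single k 1) (Pi.single l 1) * f x := by
          congr 1; apply integral_congr_ae; filter_upwards with x; rw [hfd2]
  rw [key i j, key j i]
  congr 1; apply integral_congr_ae; filter_upwards with x; rw [hsymm]

def bseq (n : ℕ) : ContDiffBump (0 : R3) :=
  { rIn := ((n : ℝ) + 1)⁻¹ / 2
    rOut := ((n : ℝ) + 1)⁻¹
    rIn_pos := by positivity
    rIn_lt_rOut := by
      have : (0:ℝ) < ((n : ℝ) + 1)⁻¹ := by positivity
      linarith }

lemma bseq_rOut_tendsto : Tendsto (fun n => (bseq n).rOut) atTop (𝓝 0) := by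
  simpa [bseq] using tendsto_one_div_add_atTop_nhds_zero_nat (𝕜 := ℝ)

def moll (n : ℕ) (g : R3 → ℝ) : R3 → ℝ :=
  convolution ((bseq n).normed volume) g (ContinuousLinearMap.lsmul ℝ ℝ) volume

lemma moll_contDiff {g : R3 → ℝ} (hg : Continuous g) (n : ℕ) :
    ContDiff ℝ (⊤ : ℕ∞) (moll n g) := by
  unfold moll
  exact HasCompactSupport.contDiff_convolution_left (μ := (volume : Measure R3))
    (ContinuousLinearMap.lsmul ℝ ℝ) (bseq n).hasCompactSupport_normed
    ((bseq n).contDiff_normed (n := ⊤) (μ := (volume : Measure R3))) hg.locallyIntegrable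

lemma moll_hasCompactSupport {g : R3 → ℝ} (hcg : HasCompactSupport g) (n : ℕ) :
    HasCompactSupport (moll n g) := by
  unfold moll
  exact HasCompactSupport.convolution _ (bseq n).hasCompactSupport_normed hcg

lemma moll_pd {g : R3 → ℝ} (hg : ContDiff ℝ 1 g) (hcg : HasCompactSupport g) (n : ℕ)
    (k : Fin 3) (x : R3) : pd k (moll n g) x = moll n (pd k g) x := by
  have h := hcg.hasFDerivAt_convolution_right (μ := (volume : Measure R3)) (ContinuousLinearMap.lsmul ℝ ℝ)
    ((bseq n).integrable_normed.locallyIntegrable) hg x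
  unfold pd moll
  rw [h.fderiv]
  rw [convolution_precompR_apply _ ((bseq n).integrable_normed.locallyIntegrable)
    (hcg.fderiv ℝ) (hg.continuous_fderiv one_ne_zero)]

lemma moll_tendsto {g : R3 → ℝ} (hg : Continuous g) (x : R3) :
    Tendsto (fun n => moll n g x) atTop (𝓝 (g x)) := by
  unfold moll
  exact ContDiffBump.convolution_tendsto_right_of_continuous bseq_rOut_tendsto hg x

lemma moll_bound {g : R3 → ℝ} (hg : Continuous g) {M : ℝ} (hM : ∀ x, |g x| ≤ M) (n : ℕ)
    (x : R3) : |moll n g x| ≤ M := by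
  have hM0 : 0 ≤ M := le_trans (abs_nonneg _) (hM 0)
  unfold moll
  rw [convolution_def, ← Real.norm_eq_abs]
  refine le_trans (norm_integral_le_integral_norm _) ?_
  have hle : ∀ t : R3, ‖(ContinuousLinearMap.lsmul ℝ ℝ) ((bseq n).normed volume t)
      (g (x - t))‖ ≤ (bseq n).normed volume t * M := by
    intro t
    simp only [ContinuousLinearMap.lsmul_apply, smul_eq_mul, Real.norm_eq_abs, abs_mul,
      abs_of_nonneg ((bseq n).nonneg_normed t)]
    exact mul_le_mul_of_nonneg_left (hM _) ((bseq n).nonneg_normed t)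
  calc ∫ t, ‖(ContinuousLinearMap.lsmul ℝ ℝ) ((bseq n).normed volume t) (g (x - t))‖
      ≤ ∫ t, (bseq n).normed volume t * M := by
        apply integral_mono_of_nonneg (Eventually.of_forall fun t => norm_nonneg _)
          ((bseq n).integrable_normed.mul_const M) (Eventually.of_forall hle)
    _ = M := by
        rw [integral_mul_const, (bseq n).integral_normed, one_mul]

lemma bound_exists {h : R3 → ℝ} (hh : Continuous h) (hch : HasCompactSupport h) :
    ∃ M : ℝ, ∀ x, |h x| ≤ M := by
  obtain ⟨M, hM⟩ := hch.exists_bound_of_continuous hh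
  exact ⟨M, fun x => by simpa [Real.norm_eq_abs] using hM x⟩

lemma ibp_c1 (f g : R3 → ℝ) (hf : ContDiff ℝ 1 f) (hcf : HasCompactSupport f)
    (hg : ContDiff ℝ 1 g) (hcg : HasCompactSupport g) (i j : Fin 3) :
    ∫ x, pd i f x * pd j g x = ∫ x, pd j f x * pd i g x := by
  have key : ∀ k l : Fin 3, Tendsto (fun n => ∫ x, pd k f x * pd l (moll n g) x) atTop
      (𝓝 (∫ x, pd k f x * pd l g x)) := by
    intro k l
    obtain ⟨M, hM⟩ := bound_exists (pd_continuous hg l) (pd_hascompact hcg l)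
    have heq : ∀ n x, pd k f x * pd l (moll n g) x = pd k f x * moll n (pd l g) x := by
      intro n x; rw [moll_pd hg hcg]
    simp_rw [heq]
    apply tendsto_integral_of_dominated_convergence (fun x => |pd k f x| * M)
    · intro n
      exact ((pd_continuous hf k).mul
        ((moll_contDiff (pd_continuous hg l) n).continuous)).aestronglyMeasurable
    · apply Continuous.integrable_of_hasCompactSupport
      · exact (pd_continuous hf k).abs.mul continuous_const
      · exact ((pd_hascompact hcf k).abs).mul_right
    · intro n
      filter_upwards with x
      rw [Real.norm_eq_abs, abs_mul]
      exact mul_le_mul_of_nonneg_left (moll_bound (pd_continuous hg l) hM n x) (abs_nonneg _)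
    · filter_upwards with x
      exact (tendsto_const_nhds).mul (moll_tendsto (pd_continuous hg l) x)
  have heqn : ∀ n, ∫ x, pd i f x * pd j (moll n g) x = ∫ x, pd j f x * pd i (moll n g) x :=
    fun n => ibp_smooth f (moll n g) hf hcf (moll_contDiff hg.continuous n)
      (moll_hasCompactSupport hcg n) i j
  have := key i j
  rw [show (fun n => ∫ x, pd i f x * pd j (moll n g) x)
      = fun n => ∫ x, pd j f x * pd i (moll n g) x from funext heqn] at this
  exact tendsto_nhds_unique this (key j i)


section Korn
variable {u : R3 → R3} (hu : ContDiff ℝ 1 u) (hcu : HasCompactSupport u)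

include hu in
lemma comp_contDiff (i : Fin 3) : ContDiff ℝ 1 (fun y => u y i) := by
  exact (contDiff_pi.mp hu) i

include hcu in
lemma comp_compact (i : Fin 3) : HasCompactSupport (fun y => u y i) := by
  have := hcu.comp_left (g := fun v : R3 => v i) rfl
  exact this

include hu hcu in
lemma prod_integrable (a b c d : Fin 3) :
    Integrable (fun x => pd a (fun y => u y b) x * pd c (fun y => u y d) x) := by
  apply Continuous.integrable_of_hasCompactSupport
  · exact (pd_continuous (comp_contDiff hu b) a).mul (pd_continuous (comp_contDiff hu d) c)
  · exact ((pd_hascompact (comp_compact hcu b) a).mul_right)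

include hu hcu in
lemma korn : ∫ x, fnormSq (jac u x) ≤ 2 * ∫ x, fnormSq (devv (symMat (jac u x))) := by
  have hint := prod_integrable hu hcu
  have hint' : ∀ a b c d : Fin 3, Integrable (fun x => jac u x a b * jac u x c d) :=
    fun a b c d => hint b a d c
  -- F2 and F3
  have hF1 : Integrable (fun x => fnormSq (jac u x)) := by
    unfold fnormSq finner jac
    apply integrable_finset_sum
    intro i _
    apply integrable_finset_sum
    intro j _
    exact hint j i j i
  have hF2 : Integrable (fun x => ∑ i, ∑ j, jac u x i j * jac u x j i) := by
    apply integrable_finset_sum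
    intro i _
    apply integrable_finset_sum
    intro j _
    exact hint j i i j
  have hF3 : Integrable (fun x => (trM (jac u x))^2) := by
    have : (fun x => (trM (jac u x))^2)
        = fun x => ∑ i, ∑ j, jac u x i i * jac u x j j := by
      funext x; rw [sq, trM, Finset.sum_mul_sum]
    rw [this]
    apply integrable_finset_sum; intro i _; apply integrable_finset_sum; intro j _
    exact hint i i j j
  have hswap : ∫ x, (∑ i, ∑ j, jac u x i j * jac u x j i) = ∫ x, (trM (jac u x))^2 := by
    rw [integral_finset_sum _ (fun i _ => integrable_finset_sum _ (fun j _ => hint' i j j i))]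
    have h1 : ∀ i : Fin 3, ∫ x, (∑ j, jac u x i j * jac u x j i)
        = ∑ j, ∫ x, jac u x i j * jac u x j i :=
      fun i => integral_finset_sum _ (fun j _ => hint' i j j i)
    simp_rw [h1]
    have hsw : ∀ i j : Fin 3, ∫ x, jac u x i j * jac u x j i
        = ∫ x, jac u x i i * jac u x j j := by
      intro i j
      exact ibp_c1 (fun y => u y i) (fun y => u y j) (comp_contDiff hu i)
        (comp_compact hcu i) (comp_contDiff hu j) (comp_compact hcu j) j i
    simp_rw [hsw]
    have h2 : (fun x => (trM (jac u x))^2)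
        = fun x => ∑ i, ∑ j, jac u x i i * jac u x j j := by
      funext x; rw [sq, trM, Finset.sum_mul_sum]
    rw [h2, integral_finset_sum _ (fun i _ => integrable_finset_sum _ (fun j _ => hint' i i j j))]
    congr 1
    funext i
    exact (integral_finset_sum _ (fun j _ => hint' i i j j)).symm
  have hdev : ∫ x, fnormSq (devv (symMat (jac u x)))
      = (∫ x, fnormSq (jac u x))/2 + (∫ x, (trM (jac u x))^2)/2
        - (∫ x, (trM (jac u x))^2)/3 := by
    have h0 : (fun x => fnormSq (devv (symMat (jac u x))))
        = fun x => fnormSq (jac u x)/2 + (∑ i, ∑ j, jac u x i j * jac u x j i)/2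
            - (trM (jac u x))^2/3 := funext fun x => korn_ptwise _
    have hadd : Integrable (fun x => fnormSq (jac u x)/2
        + (∑ i, ∑ j, jac u x i j * jac u x j i)/2) := (hF1.div_const 2).add (hF2.div_const 2)
    rw [h0, integral_sub hadd (hF3.div_const 3),
      integral_add (hF1.div_const 2) (hF2.div_const 2), integral_div, integral_div,
      integral_div, hswap]
  have hT : 0 ≤ ∫ x, (trM (jac u x))^2 := integral_nonneg fun x => sq_nonneg _
  linarith
end Korn


-- ## continuity and support helpers

lemma fnormSq_sub_le (X Y : M3) : fnormSq (X - Y) ≤ 2 * fnormSq X + 2 * fnormSq Y := by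
  simp only [fnormSq, finner, Pi.sub_apply, Fin.sum_univ_three]
  nlinarith [sq_nonneg (X 0 0 + Y 0 0), sq_nonneg (X 0 1 + Y 0 1), sq_nonneg (X 0 2 + Y 0 2),
    sq_nonneg (X 1 0 + Y 1 0), sq_nonneg (X 1 1 + Y 1 1), sq_nonneg (X 1 2 + Y 1 2),
    sq_nonneg (X 2 0 + Y 2 0), sq_nonneg (X 2 1 + Y 2 1), sq_nonneg (X 2 2 + Y 2 2)]

lemma cont_entry (i j : Fin 3) : Continuous fun X : M3 => X i j :=
  (continuous_apply j).comp (continuous_apply i)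

lemma cont_fnormSq : Continuous fnormSq := by
  unfold fnormSq finner
  exact continuous_finset_sum _ fun i _ => continuous_finset_sum _ fun j _ =>
    (cont_entry i j).mul (cont_entry i j)

lemma cont_symMat : Continuous symMat :=
  continuous_pi fun i => continuous_pi fun j =>
    ((cont_entry i j).add (cont_entry j i)).div_const 2

lemma cont_trM : Continuous trM := continuous_finset_sum _ fun i _ => cont_entry i i

lemma cont_devv : Continuous devv :=
  continuous_pi fun i => continuous_pi fun j =>
    (cont_entry i j).sub ((cont_trM.div_const 3).mul continuous_const)

lemma cont_quad (L : M3 →ₗ[ℝ] M3) : Continuous fun X : M3 => finner (L X) X := by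
  have hL : Continuous L := L.continuous_of_finiteDimensional
  unfold finner
  exact continuous_finset_sum _ fun i _ => continuous_finset_sum _ fun j _ =>
    (((cont_entry i j).comp hL).mul (cont_entry i j))

lemma cont_jac {u : R3 → R3} (hu : ContDiff ℝ 1 u) : Continuous (jac u) :=
  continuous_pi fun i => continuous_pi fun j => pd_continuous (comp_contDiff hu i) j

lemma jac_zero {u : R3 → R3} {x : R3} (hx : x ∉ tsupport u) (i j : Fin 3) :
    jac u x i j = 0 := by
  have hsub : tsupport (fun y => u y i) ⊆ tsupport u := by
    apply closure_mono
    intro y hy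
    simp only [Function.mem_support] at hy ⊢
    intro h0; exact hy (by rw [h0]; rfl)
  by_contra h
  exact hx (hsub (pd_support_subset (f := fun y => u y i) j
    (by simpa [Function.mem_support, jac] using h)))

lemma fnormSq_jac_zero {u : R3 → R3} {x : R3} (hx : x ∉ tsupport u) :
    fnormSq (jac u x) = 0 := by
  simp [fnormSq, finner, jac_zero hx]

lemma fnormSq_dev_jac_zero {u : R3 → R3} {x : R3} (hx : x ∉ tsupport u) :
    fnormSq (devv (symMat (jac u x))) = 0 := by
  simp [fnormSq, finner, devv, symMat, trM, idM, jac_zero hx]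

lemma int_fnormSq_jac {u : R3 → R3} (hu : ContDiff ℝ 1 u) (hcu : HasCompactSupport u) :
    Integrable (fun x => fnormSq (jac u x)) := by
  apply Continuous.integrable_of_hasCompactSupport (cont_fnormSq.comp (cont_jac hu))
  exact HasCompactSupport.intro hcu.isCompact fun x hx => fnormSq_jac_zero hx

lemma int_fnormSq_dev_jac {u : R3 → R3} (hu : ContDiff ℝ 1 u) (hcu : HasCompactSupport u) :
    Integrable (fun x => fnormSq (devv (symMat (jac u x)))) := by
  apply Continuous.integrable_of_hasCompactSupport
    ((cont_fnormSq.comp (cont_devv.comp cont_symMat)).comp (cont_jac hu))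
  exact HasCompactSupport.intro hcu.isCompact fun x hx => fnormSq_dev_jac_zero hx


/-- coercivity estimate of the further relaxed model in terms of
∇u and dev sym P. -/
theorem stmt_13 (Ω : Set R3) (hΩo : IsOpen Ω) (hΩb : Bornology.IsBounded Ω)
    (CC HH : M3 →ₗ[ℝ] M3)
    (hCmap : ∀ X : M3, isSymmM X → isSymmM (CC X))
    (hHmap : ∀ X : M3, isSymmM X → isSymmM (HH X))
    (hCsa : ∀ X Y : M3, finner (CC X) Y = finner X (CC Y))
    (hHsa : ∀ X Y : M3, finner (HH X) Y = finner X (HH Y))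
    (cm cM hm hM : ℝ) (hcm : 0 < cm) (hcM : 0 < cM) (hhm : 0 < hm) (hhM : 0 < hM)
    (hC : ∀ X : M3, isSymmM X →
      cm * fnormSq X ≤ finner (CC X) X ∧ finner (CC X) X ≤ cM * fnormSq X)
    (hH : ∀ X : M3, isSymmM X →
      hm * fnormSq X ≤ finner (HH X) X ∧ finner (HH X) X ≤ hM * fnormSq X) :
    ∃ a₂ : ℝ, 0 < a₂ ∧ ∀ (u : R3 → R3) (P : R3 → M3),
      ContDiff ℝ 1 u → HasCompactSupport u → tsupport u ⊆ Ω →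
      ContinuousOn P Ω → IntegrableOn (fun x => fnormSq (P x)) Ω →
      a₂ * ((∫ x in Ω, fnormSq (jac u x)) + ∫ x in Ω, fnormSq (devv (symMat (P x)))) ≤
        ∫ x in Ω, (finner (CC (symMat (jac u x - P x))) (symMat (jac u x - P x))
          + finner (HH (devv (symMat (P x)))) (devv (symMat (P x)))) := by
  refine ⟨min (cm/4) (hm/5), lt_min (by linarith) (by linarith), ?_⟩
  intro u P hu hcu hsup hPc hP2
  have hΩm : MeasurableSet Ω := hΩo.measurableSet
  have hSc : ContinuousOn (fun x => symMat (jac u x - P x)) Ω :=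
    cont_symMat.comp_continuousOn ((cont_jac hu).continuousOn.sub hPc)
  have hDc : ContinuousOn (fun x => devv (symMat (P x))) Ω :=
    (cont_devv.comp cont_symMat).comp_continuousOn hPc
  -- pointwise bounds
  have hSb : ∀ x, fnormSq (symMat (jac u x - P x))
      ≤ 2 * fnormSq (jac u x) + 2 * fnormSq (P x) :=
    fun x => le_trans (fnormSq_symMat_le _) (fnormSq_sub_le _ _)
  have hDb : ∀ x, fnormSq (devv (symMat (P x))) ≤ fnormSq (P x) :=
    fun x => le_trans (fnormSq_devv_le _) (fnormSq_symMat_le _)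
  -- integrability on Ω
  have hF1Ω : IntegrableOn (fun x => fnormSq (jac u x)) Ω :=
    (int_fnormSq_jac hu hcu).integrableOn
  have hfS : IntegrableOn (fun x => fnormSq (symMat (jac u x - P x))) Ω := by
    apply Integrable.mono' ((hF1Ω.const_mul 2).add (hP2.const_mul 2))
    · exact (cont_fnormSq.comp_continuousOn hSc).aestronglyMeasurable hΩm
    · exact Filter.Eventually.of_forall fun x => by
        rw [Real.norm_eq_abs, abs_of_nonneg (fnormSq_nonneg _)]; exact hSb x
  have hfD : IntegrableOn (fun x => fnormSq (devv (symMat (P x)))) Ω := by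
    apply Integrable.mono' hP2
    · exact (cont_fnormSq.comp_continuousOn hDc).aestronglyMeasurable hΩm
    · exact Filter.Eventually.of_forall fun x => by
        rw [Real.norm_eq_abs, abs_of_nonneg (fnormSq_nonneg _)]; exact hDb x
  have hfDu : IntegrableOn (fun x => fnormSq (devv (symMat (jac u x)))) Ω :=
    (int_fnormSq_dev_jac hu hcu).integrableOn
  -- quadratic form bounds
  have hCb : ∀ x, cm * fnormSq (symMat (jac u x - P x))
      ≤ finner (CC (symMat (jac u x - P x))) (symMat (jac u x - P x)) :=
    fun x => (hC _ (isSymm_symMat _)).1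
  have hCb' : ∀ x, finner (CC (symMat (jac u x - P x))) (symMat (jac u x - P x))
      ≤ cM * fnormSq (symMat (jac u x - P x)) := fun x => (hC _ (isSymm_symMat _)).2
  have hHb : ∀ x, hm * fnormSq (devv (symMat (P x)))
      ≤ finner (HH (devv (symMat (P x)))) (devv (symMat (P x))) :=
    fun x => (hH _ (isSymm_devv (isSymm_symMat _))).1
  have hHb' : ∀ x, finner (HH (devv (symMat (P x)))) (devv (symMat (P x)))
      ≤ hM * fnormSq (devv (symMat (P x))) := fun x => (hH _ (isSymm_devv (isSymm_symMat _))).2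
  have hfR : IntegrableOn (fun x => finner (CC (symMat (jac u x - P x))) (symMat (jac u x - P x))
      + finner (HH (devv (symMat (P x)))) (devv (symMat (P x)))) Ω := by
    apply Integrable.mono' ((hfS.const_mul cM).add (hfD.const_mul hM))
    · exact (((cont_quad CC).comp_continuousOn hSc).add
        ((cont_quad HH).comp_continuousOn hDc)).aestronglyMeasurable hΩm
    · refine Filter.Eventually.of_forall fun x => ?_
      rw [Real.norm_eq_abs, abs_of_nonneg]
      · exact add_le_add (hCb' x) (hHb' x)
      · have h1 := hCb x; have h2 := hHb x
        have h3 : 0 ≤ cm * fnormSq (symMat (jac u x - P x)) :=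
          mul_nonneg (le_of_lt hcm) (fnormSq_nonneg _)
        have h4 : 0 ≤ hm * fnormSq (devv (symMat (P x))) :=
          mul_nonneg (le_of_lt hhm) (fnormSq_nonneg _)
        linarith
  -- notation for the three set integrals
  have hJ1 : (0:ℝ) ≤ ∫ x in Ω, fnormSq (symMat (jac u x - P x)) :=
    setIntegral_nonneg hΩm fun x _ => fnormSq_nonneg _
  have hJ2 : (0:ℝ) ≤ ∫ x in Ω, fnormSq (devv (symMat (P x))) :=
    setIntegral_nonneg hΩm fun x _ => fnormSq_nonneg _
  -- lower bound for the RHS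
  have hRHS : cm * (∫ x in Ω, fnormSq (symMat (jac u x - P x)))
      + hm * (∫ x in Ω, fnormSq (devv (symMat (P x))))
      ≤ ∫ x in Ω, (finner (CC (symMat (jac u x - P x))) (symMat (jac u x - P x))
          + finner (HH (devv (symMat (P x)))) (devv (symMat (P x)))) := by
    have h1 : ∫ x in Ω, (cm * fnormSq (symMat (jac u x - P x))
          + hm * fnormSq (devv (symMat (P x))))
        ≤ ∫ x in Ω, (finner (CC (symMat (jac u x - P x))) (symMat (jac u x - P x))
          + finner (HH (devv (symMat (P x)))) (devv (symMat (P x)))) :=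
      setIntegral_mono_on ((hfS.const_mul cm).add (hfD.const_mul hm)) hfR hΩm
        (fun x _ => add_le_add (hCb x) (hHb x))
    have h2 : ∫ x in Ω, (cm * fnormSq (symMat (jac u x - P x))
          + hm * fnormSq (devv (symMat (P x))))
        = cm * (∫ x in Ω, fnormSq (symMat (jac u x - P x)))
          + hm * (∫ x in Ω, fnormSq (devv (symMat (P x)))) := by
      rw [integral_add (hfS.const_mul cm) (hfD.const_mul hm), integral_const_mul,
        integral_const_mul]
    linarith
  -- extend supported integrals to all of ℝ³
  have hnotin : ∀ x, x ∉ Ω → x ∉ tsupport u := fun x hx h => hx (hsup h)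
  have hEq1 : ∫ x in Ω, fnormSq (jac u x) = ∫ x, fnormSq (jac u x) :=
    setIntegral_eq_integral_of_forall_compl_eq_zero fun x hx =>
      fnormSq_jac_zero (hnotin x hx)
  have hEq2 : ∫ x in Ω, fnormSq (devv (symMat (jac u x)))
      = ∫ x, fnormSq (devv (symMat (jac u x))) :=
    setIntegral_eq_integral_of_forall_compl_eq_zero fun x hx =>
      fnormSq_dev_jac_zero (hnotin x hx)
  -- pointwise decomposition bound
  have hDu : ∀ x, fnormSq (devv (symMat (jac u x)))
      ≤ 2 * fnormSq (symMat (jac u x - P x)) + 2 * fnormSq (devv (symMat (P x))) := by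
    intro x
    have h1 : (fun i j => (jac u x - P x) i j + P x i j) = jac u x := by
      funext a b; simp
    have h0 : devv (symMat (jac u x)) = fun i j =>
        devv (symMat (jac u x - P x)) i j + devv (symMat (P x)) i j := by
      funext i j
      calc devv (symMat (jac u x)) i j
          = devv (symMat (fun i j => (jac u x - P x) i j + P x i j)) i j := by rw [h1]
        _ = devv (symMat (jac u x - P x)) i j + devv (symMat (P x)) i j :=
            devv_symMat_add _ _ i j
    calc fnormSq (devv (symMat (jac u x)))
        = fnormSq (fun i j => devv (symMat (jac u x - P x)) i j
            + devv (symMat (P x)) i j) := by rw [h0]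
      _ ≤ 2 * fnormSq (devv (symMat (jac u x - P x))) + 2 * fnormSq (devv (symMat (P x))) :=
          fnormSq_add_le _ _
      _ ≤ 2 * fnormSq (symMat (jac u x - P x)) + 2 * fnormSq (devv (symMat (P x))) := by
          have := fnormSq_devv_le (symMat (jac u x - P x)); linarith
  have hstep : ∫ x in Ω, fnormSq (devv (symMat (jac u x)))
      ≤ 2 * (∫ x in Ω, fnormSq (symMat (jac u x - P x)))
        + 2 * (∫ x in Ω, fnormSq (devv (symMat (P x)))) := by
    have h1 : ∫ x in Ω, fnormSq (devv (symMat (jac u x)))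
        ≤ ∫ x in Ω, (2 * fnormSq (symMat (jac u x - P x))
          + 2 * fnormSq (devv (symMat (P x)))) :=
      setIntegral_mono_on hfDu ((hfS.const_mul 2).add (hfD.const_mul 2)) hΩm
        (fun x _ => hDu x)
    have h2 : ∫ x in Ω, (2 * fnormSq (symMat (jac u x - P x))
          + 2 * fnormSq (devv (symMat (P x))))
        = 2 * (∫ x in Ω, fnormSq (symMat (jac u x - P x)))
          + 2 * (∫ x in Ω, fnormSq (devv (symMat (P x)))) := by
      rw [integral_add (hfS.const_mul 2) (hfD.const_mul 2), integral_const_mul,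
        integral_const_mul]
    linarith
  have hkorn := korn hu hcu
  have hI1 : ∫ x in Ω, fnormSq (jac u x)
      ≤ 4 * (∫ x in Ω, fnormSq (symMat (jac u x - P x)))
        + 4 * (∫ x in Ω, fnormSq (devv (symMat (P x)))) := by
    rw [hEq1]; rw [← hEq2] at hkorn; linarith
  -- final arithmetic
  have ha1 : min (cm/4) (hm/5) ≤ cm/4 := min_le_left _ _
  have ha2 : min (cm/4) (hm/5) ≤ hm/5 := min_le_right _ _
  have ha0 : (0:ℝ) < min (cm/4) (hm/5) := lt_min (by linarith) (by linarith)
  have e1 := mul_le_mul_of_nonneg_right ha1 hJ1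
  have e2 := mul_le_mul_of_nonneg_right ha2 hJ2
  have e3 := mul_le_mul_of_nonneg_left hI1 (le_of_lt ha0)
  nlinarith [hRHS, hJ1, hJ2]
end
end
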